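/- arXiv:2111.03028 — 6 statements merged into one kernel-verified Lean document; each statement's English description precedes it below -/
import Mathlib

section
/- Let 0 < q ≤ r ≤ 1, let W_q and W_r be geometrically distributed with parameters q and r respectively, and let φ : ℝ → [0,∞) be convex. Then E[φ(W_r - E[W_r])] ≤ E[φ(W_q - E[W_q])]; i.e., the centered geometric distribution with smaller success probability dominates in the convex order. -/
open MeasureTheory

/-- A convex function on ℝ has a supporting line at every point. -/
lemma exists_subgradient {φ : ℝ → ℝ} (hφ : ConvexOn ℝ Set.univ φ) (x₀ : ℝ) :
    ∃ k : ℝ, ∀ y : ℝ, φ x₀ + k * (y - x₀) ≤ φ y := by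
  set S : Set ℝ := (fun u => (φ x₀ - φ u) / (x₀ - u)) '' (Set.Iio x₀) with hS
  have hne : S.Nonempty := ⟨_, ⟨x₀ - 1, by simp, rfl⟩⟩
  have hslope : ∀ u < x₀, ∀ v, x₀ < v →
      (φ x₀ - φ u) / (x₀ - u) ≤ (φ v - φ x₀) / (v - x₀) := fun u hu v hv =>
    hφ.slope_mono_adjacent trivial trivial hu hv
  have hbdd : BddAbove S := by
    refine ⟨(φ (x₀ + 1) - φ x₀) / (x₀ + 1 - x₀), ?_⟩
    rintro s ⟨u, hu, rfl⟩
    exact hslope u hu _ (by linarith)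
  refine ⟨sSup S, fun y => ?_⟩
  rcases lt_trichotomy y x₀ with h | h | h
  · have h1 : (φ x₀ - φ y) / (x₀ - y) ≤ sSup S := le_csSup hbdd ⟨y, h, rfl⟩
    have h2 : 0 < x₀ - y := by linarith
    rw [div_le_iff₀ h2] at h1
    nlinarith [h1]
  · simp [h]
  · have h1 : sSup S ≤ (φ y - φ x₀) / (y - x₀) := by
      apply csSup_le hne
      rintro s ⟨u, hu, rfl⟩
      exact hslope u hu _ h
    have h2 : 0 < y - x₀ := by linarith
    rw [le_div_iff₀ h2] at h1
    nlinarith [h1]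

/-- Jensen's inequality for countable sums. -/
lemma jensen_tsum {φ : ℝ → ℝ} (hφ : ConvexOn ℝ Set.univ φ) (w f : ℕ → ℝ)
    (hw : ∀ n, 0 ≤ w n) (W x₀ : ℝ) (hW : HasSum w W)
    (hmean : HasSum (fun n => w n * f n) (W * x₀))
    (hsφ : Summable (fun n => w n * φ (f n))) :
    W * φ x₀ ≤ ∑' n, w n * φ (f n) := by
  obtain ⟨k, hk⟩ := exists_subgradient hφ x₀
  have h1 : HasSum (fun n => (φ x₀ - k * x₀) * w n + k * (w n * f n))
      ((φ x₀ - k * x₀) * W + k * (W * x₀)) := (hW.mul_left _).add (hmean.mul_left k)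
  have h2 : W * φ x₀ = (φ x₀ - k * x₀) * W + k * (W * x₀) := by ring
  rw [h2, ← h1.tsum_eq]
  refine Summable.tsum_le_tsum (fun n => ?_) h1.summable hsφ
  have := hk (f n)
  nlinarith [hw n, hk (f n)]

lemma hasSum_geom_pmf {p : ℝ} (hp : 0 < p) (hp1 : p ≤ 1) :
    HasSum (fun m : ℕ => p * (1 - p) ^ m) 1 := by
  have h := hasSum_geometric_of_lt_one (by linarith : (0:ℝ) ≤ 1 - p) (by linarith)
  have := h.mul_left p
  simpa [sub_sub_cancel, mul_inv_cancel₀ hp.ne'] using this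

lemma hasSum_choose_real (k : ℕ) {x : ℝ} (hx : |x| < 1) :
    HasSum (fun n : ℕ => ((n + k).choose k : ℝ) * x ^ n) (1 / (1 - x) ^ (k + 1)) :=
  hasSum_choose_mul_geometric_of_norm_lt_one k (by simpa using hx)

lemma hasSum_geom_mean {p : ℝ} (hp : 0 < p) (hp1 : p ≤ 1) :
    HasSum (fun m : ℕ => (m : ℝ) * (p * (1 - p) ^ m)) ((1 - p) / p) := by
  have hx0 : (0:ℝ) ≤ 1 - p := by linarith
  have h1 : HasSum (fun m : ℕ => ((m + 1).choose 1 : ℝ) * (1 - p) ^ m)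
      (1 / (1 - (1 - p)) ^ 2) :=
    hasSum_choose_real 1 (by rw [abs_of_nonneg hx0]; linarith)
  have h0 : HasSum (fun m : ℕ => (1 - p) ^ m) (1 / (1 - (1 - p))) := by
    simpa using hasSum_geometric_of_lt_one hx0 (by linarith)
  have h2 := (h1.sub h0).mul_left p
  have heq : ∀ m : ℕ, p * (((m + 1).choose 1 : ℝ) * (1 - p) ^ m - (1 - p) ^ m)
      = (m : ℝ) * (p * (1 - p) ^ m) := by
    intro m; simp [Nat.choose_one_right]; ring
  rw [funext heq] at h2
  convert h2 using 1
  · rfl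
  rw [sub_sub_cancel]
  field_simp


lemma hasSum_negbinom_id (m : ℕ) {x : ℝ} (hx : |x| < 1) :
    HasSum (fun k : ℕ => (k : ℝ) * ((m + k).choose k : ℝ) * x ^ k)
      (((m : ℝ) + 1) * x / (1 - x) ^ (m + 2)) := by
  have key : ∀ k : ℕ, (k : ℝ) * ((m + k).choose k : ℝ)
      = ((m : ℝ) + 1) * ((m + k).choose (m + 1) : ℝ) := by
    intro k
    have h1 : (m + k).choose k = (m + k).choose m := by
      have := Nat.choose_symm (Nat.le_add_right m k)
      simpa using this
    have h2 : (m + k).choose (m + 1) * (m + 1) = (m + k).choose m * ((m + k) - m) :=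
      Nat.choose_succ_right_eq (m + k) m
    have h3 : (m + k) - m = k := by omega
    rw [h3] at h2
    have h4 : ((m + k).choose (m + 1) : ℝ) * ((m : ℝ) + 1)
        = ((m + k).choose m : ℝ) * k := by exact_mod_cast h2
    rw [h1]
    linear_combination -h4
  have hf : HasSum (fun n : ℕ => ((m + (n + 1)).choose (m + 1) : ℝ) * x ^ (n + 1))
      (x * (1 / (1 - x) ^ (m + 2))) := by
    have := (hasSum_choose_real (m + 1) hx).mul_left x
    convert this using 2 with n
    · rfl
    rw [show m + (n + 1) = n + (m + 1) by omega]
    ring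
  have hf2 : HasSum (fun k : ℕ => ((m + k).choose (m + 1) : ℝ) * x ^ k)
      (x * (1 / (1 - x) ^ (m + 2))) := by
    have := (hasSum_nat_add_iff (f := fun k : ℕ => ((m + k).choose (m + 1) : ℝ) * x ^ k) 1).1 hf
    simpa [Nat.choose_eq_zero_of_lt (by omega : m < m + 1)] using this
  have hres := hf2.mul_left ((m : ℝ) + 1)
  have heq : (fun k : ℕ => (k : ℝ) * ((m + k).choose k : ℝ) * x ^ k)
      = fun k : ℕ => ((m : ℝ) + 1) * (((m + k).choose (m + 1) : ℝ) * x ^ k) := by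
    funext k; rw [key k]; ring
  rw [heq]
  convert hres using 1
  · rfl
  ring



noncomputable def geomJ (q r : ℝ) (m n : ℕ) : ℝ :=
  if m ≤ n then q * (1 - q) ^ n * ((n.choose m : ℝ) *
    ((q * (1 - r) / (r * (1 - q))) ^ m * (1 - q * (1 - r) / (r * (1 - q))) ^ (n - m))) else 0

lemma beta_eq {q r : ℝ} (hq : 0 < q) (hqr : q ≤ r) (hr : r < 1) :
    (1 - q) * (1 - q * (1 - r) / (r * (1 - q))) = 1 - q / r := by
  have h1 : (0:ℝ) < r := lt_of_lt_of_le hq hqr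
  have h2 : q < 1 := lt_of_le_of_lt hqr hr
  have hr' : r ≠ 0 := h1.ne'
  have hq' : (1:ℝ) - q ≠ 0 := by linarith
  field_simp
  ring

lemma alpha_eq {q r : ℝ} (hq : 0 < q) (hqr : q ≤ r) (hr : r < 1) :
    (1 - q) * (q * (1 - r) / (r * (1 - q))) = q * (1 - r) / r := by
  have h1 : (0:ℝ) < r := lt_of_lt_of_le hq hqr
  have h2 : q < 1 := lt_of_le_of_lt hqr hr
  have hr' : r ≠ 0 := h1.ne'
  have hq' : (1:ℝ) - q ≠ 0 := by linarith
  field_simp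

lemma beta_abs {q r : ℝ} (hq : 0 < q) (hqr : q ≤ r) (hr : r < 1) :
    |1 - q / r| < 1 := by
  have h1 : (0:ℝ) < r := lt_of_lt_of_le hq hqr
  have h2 : q / r ≤ 1 := (div_le_one h1).2 hqr
  have h3 : 0 < q / r := div_pos hq h1
  rw [abs_of_nonneg (by linarith)]
  linarith

lemma geomJ_shift {q r : ℝ} (hq : 0 < q) (hqr : q ≤ r) (hr : r < 1) (m k : ℕ) :
    geomJ q r m (m + k) = (q * (1 - q) ^ m * (q * (1 - r) / (r * (1 - q))) ^ m) *
      (((k + m).choose m : ℝ) * (1 - q / r) ^ k) := by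
  rw [geomJ, if_pos (Nat.le_add_right m k)]
  have h1 : m + k - m = k := by omega
  have h2 : (m + k).choose m = (k + m).choose m := by rw [Nat.add_comm]
  rw [h1, h2, pow_add]
  have h3 : (1 - q) ^ k * (1 - q * (1 - r) / (r * (1 - q))) ^ k
      = (1 - q / r) ^ k := by
    rw [← mul_pow, beta_eq hq hqr hr]
  calc q * ((1 - q) ^ m * (1 - q) ^ k) * (((k + m).choose m : ℝ) *
        ((q * (1 - r) / (r * (1 - q))) ^ m * (1 - q * (1 - r) / (r * (1 - q))) ^ k))
      = (q * (1 - q) ^ m * (q * (1 - r) / (r * (1 - q))) ^ m) *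
        (((k + m).choose m : ℝ) * ((1 - q) ^ k * (1 - q * (1 - r) / (r * (1 - q))) ^ k)) := by
        ring
    _ = _ := by rw [h3]

lemma geomJ_value {q r : ℝ} (hq : 0 < q) (hqr : q ≤ r) (hr : r < 1) (m : ℕ) :
    (q * (1 - q) ^ m * (q * (1 - r) / (r * (1 - q))) ^ m) * (1 / (1 - (1 - q / r)) ^ (m + 1))
      = r * (1 - r) ^ m := by
  have h1 : (0:ℝ) < r := lt_of_lt_of_le hq hqr
  have h2 : q < 1 := lt_of_le_of_lt hqr hr
  have hr' : r ≠ 0 := h1.ne'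
  have hq' : q ≠ 0 := hq.ne'
  have hq1' : (1:ℝ) - q ≠ 0 := by linarith
  have h3 : (1:ℝ) - (1 - q / r) = q / r := by ring
  have h4 : (1 - q) ^ m * (q * (1 - r) / (r * (1 - q))) ^ m = (q * (1 - r) / r) ^ m := by
    rw [← mul_pow, alpha_eq hq hqr hr]
  rw [h3, mul_assoc q, h4]
  field_simp
  rw [div_pow, div_pow, mul_pow, pow_succ]
  field_simp
  ring

lemma geomJ_eq_zero {q r : ℝ} {m n : ℕ} (h : n < m) : geomJ q r m n = 0 := by
  rw [geomJ, if_neg (by omega)]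

lemma geomJ_hasSum {q r : ℝ} (hq : 0 < q) (hqr : q ≤ r) (hr : r < 1) (m : ℕ) :
    HasSum (fun n => geomJ q r m n) (r * (1 - r) ^ m) := by
  have hinj : Function.Injective (fun k : ℕ => m + k) := fun a b h => by simpa using h
  have hvan : ∀ n, n ∉ Set.range (fun k : ℕ => m + k) → geomJ q r m n = 0 := by
    intro n hn
    apply geomJ_eq_zero
    by_contra h
    exact hn ⟨n - m, by simp; omega⟩
  have h := (hasSum_choose_real m (beta_abs hq hqr hr)).mul_left
    (q * (1 - q) ^ m * (q * (1 - r) / (r * (1 - q))) ^ m)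
  rw [geomJ_value hq hqr hr m] at h
  have h3 : HasSum (fun k => geomJ q r m (m + k)) (r * (1 - r) ^ m) := by
    rw [show (fun k => geomJ q r m (m + k)) = _ from funext (geomJ_shift hq hqr hr m)]
    exact h
  exact (hinj.hasSum_iff hvan).1 h3

lemma geomJ_value2 {q r : ℝ} (hq : 0 < q) (hqr : q ≤ r) (hr : r < 1) (m : ℕ) :
    (q * (1 - q) ^ m * (q * (1 - r) / (r * (1 - q))) ^ m) *
      (((m : ℝ) + 1) * (1 - q / r) / (1 - (1 - q / r)) ^ (m + 2))
      = r * (1 - r) ^ m * (((m : ℝ) + 1) * (r - q) / q) := by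
  have h1 : (0:ℝ) < r := lt_of_lt_of_le hq hqr
  have V := geomJ_value hq hqr hr m
  have h3 : (1:ℝ) - (1 - q / r) = q / r := by ring
  rw [h3] at V ⊢
  rw [show m + 2 = (m + 1) + 1 by omega, pow_succ]
  have hc : (q * (1 - q) ^ m * (q * (1 - r) / (r * (1 - q))) ^ m) *
      (((m : ℝ) + 1) * (1 - q / r) / ((q / r) ^ (m + 1) * (q / r)))
      = ((q * (1 - q) ^ m * (q * (1 - r) / (r * (1 - q))) ^ m) * (1 / (q / r) ^ (m + 1))) *
        (((m : ℝ) + 1) * (1 - q / r) / (q / r)) := by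
    ring
  rw [hc, V]
  have h4 : ((m : ℝ) + 1) * (1 - q / r) / (q / r) = ((m : ℝ) + 1) * (r - q) / q := by
    have hq' : q ≠ 0 := hq.ne'
    have hr' : r ≠ 0 := h1.ne'
    field_simp
  rw [h4]

lemma geomJ_mul_hasSum {q r : ℝ} (hq : 0 < q) (hqr : q ≤ r) (hr : r < 1) (m : ℕ) :
    HasSum (fun n => geomJ q r m n * n)
      (r * (1 - r) ^ m * (((m : ℝ) * r + r - q) / q)) := by
  have h1 : (0:ℝ) < r := lt_of_lt_of_le hq hqr
  have hinj : Function.Injective (fun k : ℕ => m + k) := fun a b h => by simpa using h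
  have hvan : ∀ n, n ∉ Set.range (fun k : ℕ => m + k) → geomJ q r m n * n = 0 := by
    intro n hn
    have : n < m := by
      by_contra h
      exact hn ⟨n - m, by simp; omega⟩
    rw [geomJ_eq_zero this, zero_mul]
  rw [← hinj.hasSum_iff hvan]
  set c := q * (1 - q) ^ m * (q * (1 - r) / (r * (1 - q))) ^ m with hcdef
  have hA := (hasSum_choose_real m (beta_abs hq hqr hr)).mul_left (c * m)
  have hB := (hasSum_negbinom_id m (beta_abs hq hqr hr)).mul_left c
  have hsum := hA.add hB
  have heq : (fun k : ℕ => geomJ q r m (m + k) * ((m + k : ℕ) : ℝ))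
      = fun k : ℕ => c * (m : ℝ) * (((k + m).choose m : ℝ) * (1 - q / r) ^ k)
        + c * ((k : ℝ) * ((m + k).choose k : ℝ) * (1 - q / r) ^ k) := by
    funext k
    rw [geomJ_shift hq hqr hr m k]
    have hch : ((m + k).choose k : ℝ) = ((k + m).choose m : ℝ) := by
      have h5 : (m + k).choose k = (m + k).choose m := by
        have := Nat.choose_symm (Nat.le_add_right m k)
        simpa using this
      rw [h5, Nat.add_comm m k]
    rw [hch]
    push_cast
    ring
  have hval : c * (m : ℝ) * (1 / (1 - (1 - q / r)) ^ (m + 1))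
      + c * (((m : ℝ) + 1) * (1 - q / r) / (1 - (1 - q / r)) ^ (m + 2))
      = r * (1 - r) ^ m * (((m : ℝ) * r + r - q) / q) := by
    have V := geomJ_value hq hqr hr m
    have V2 := geomJ_value2 hq hqr hr m
    rw [show c * (m : ℝ) * (1 / (1 - (1 - q / r)) ^ (m + 1))
        = (m : ℝ) * (c * (1 / (1 - (1 - q / r)) ^ (m + 1))) by ring, V, V2]
    field_simp
    ring
  have hcomp : ((fun n : ℕ => geomJ q r m n * (n : ℝ)) ∘ fun k : ℕ => m + k)
      = fun k : ℕ => c * (m : ℝ) * (((k + m).choose m : ℝ) * (1 - q / r) ^ k)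
        + c * ((k : ℝ) * ((m + k).choose k : ℝ) * (1 - q / r) ^ k) := by
    funext k
    simp only [Function.comp]
    exact congrFun heq k
  rw [hcomp, ← hval]
  exact hsum

lemma one_sub_alpha_nonneg {q r : ℝ} (hq : 0 < q) (hqr : q ≤ r) (hr : r < 1) :
    0 ≤ 1 - q * (1 - r) / (r * (1 - q)) := by
  have h1 : (0:ℝ) < r := lt_of_lt_of_le hq hqr
  have h2 : q < 1 := lt_of_le_of_lt hqr hr
  have h3 : 1 - q * (1 - r) / (r * (1 - q)) = (r - q) / (r * (1 - q)) := by
    have hr' : r ≠ 0 := h1.ne'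
    have hq' : (1:ℝ) - q ≠ 0 := by linarith
    field_simp
    ring
  rw [h3]
  have h4 : 0 ≤ r - q := by linarith
  have h5 : 0 < r * (1 - q) := by nlinarith
  positivity

lemma geomJ_nonneg {q r : ℝ} (hq : 0 < q) (hqr : q ≤ r) (hr : r < 1) (m n : ℕ) :
    0 ≤ geomJ q r m n := by
  have h1 : (0:ℝ) < r := lt_of_lt_of_le hq hqr
  have h2 : q < 1 := lt_of_le_of_lt hqr hr
  have ha : 0 ≤ q * (1 - r) / (r * (1 - q)) := by
    have : 0 < r * (1 - q) := by nlinarith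
    have : 0 ≤ q * (1 - r) := by nlinarith
    positivity
  have hb := one_sub_alpha_nonneg hq hqr hr
  rw [geomJ]
  split
  · have hc : (0:ℝ) ≤ 1 - q := by linarith
    positivity
  · exact le_refl 0

lemma geomJ_sum_eq {q r : ℝ} (hq : 0 < q) (hqr : q ≤ r) (hr : r < 1) (n : ℕ) :
    ∑ m ∈ Finset.range (n + 1), geomJ q r m n = q * (1 - q) ^ n := by
  set a := q * (1 - r) / (r * (1 - q)) with ha
  have h1 : ∀ m ∈ Finset.range (n + 1), geomJ q r m n
      = q * (1 - q) ^ n * (a ^ m * (1 - a) ^ (n - m) * (n.choose m : ℝ)) := by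
    intro m hm
    rw [geomJ, if_pos (by simpa [Nat.lt_succ_iff] using hm)]
    ring
  rw [Finset.sum_congr rfl h1, ← Finset.mul_sum, ← add_pow a (1 - a) n]
  norm_num

lemma geomJ_le {q r : ℝ} (hq : 0 < q) (hqr : q ≤ r) (hr : r < 1) (m n : ℕ) :
    geomJ q r m n ≤ q * (1 - q) ^ n := by
  by_cases h : m ≤ n
  · rw [← geomJ_sum_eq hq hqr hr n]
    exact Finset.single_le_sum (fun i _ => geomJ_nonneg hq hqr hr i n)
      (Finset.mem_range.2 (by omega))
  · rw [geomJ_eq_zero (by omega)]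
    have h2 : q < 1 := lt_of_le_of_lt hqr hr
    have : (0:ℝ) ≤ 1 - q := by linarith
    positivity




lemma convex_scale {φ : ℝ → ℝ} (hφ : ConvexOn ℝ Set.univ φ) {t : ℝ}
    (ht0 : 0 ≤ t) (ht1 : t ≤ 1) (x : ℝ) : φ (t * x) ≤ t * φ x + (1 - t) * φ 0 := by
  have h := hφ.2 (Set.mem_univ x) (Set.mem_univ (0:ℝ)) ht0 (by linarith : (0:ℝ) ≤ 1 - t)
    (by ring)
  simpa using h

lemma lintegral_geom {Ω : Type*} [MeasurableSpace Ω] (μ : Measure Ω) (W : Ω → ℕ)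
    (hWm : Measurable W) (g : ℕ → ENNReal) :
    ∫⁻ ω, g (W ω) ∂μ = ∑' m : ℕ, g m * μ {ω | W ω = m} := by
  rw [← lintegral_map (measurable_of_countable g) hWm, lintegral_countable']
  refine tsum_congr fun m => ?_
  rw [Measure.map_apply hWm (MeasurableSet.singleton m)]
  rfl

/-- Step B : `φ(0) ≤ E[φ(W_q - c_q)]` -/
lemma stepB {q : ℝ} (hq : 0 < q) (hq1 : q ≤ 1) {φ : ℝ → ℝ}
    (hφ : ConvexOn ℝ Set.univ φ) (hφ0 : ∀ x, 0 ≤ φ x) :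
    ENNReal.ofReal (φ 0)
      ≤ ∑' n : ℕ, ENNReal.ofReal (φ ((n : ℝ) - (1 - q) / q)) * ENNReal.ofReal (q * (1 - q) ^ n) := by
  set w : ℕ → ℝ := fun n => q * (1 - q) ^ n with hw
  have hwn : ∀ n, 0 ≤ w n := by
    intro n
    have : (0:ℝ) ≤ 1 - q := by linarith
    positivity
  have heq : ∀ n : ℕ, ENNReal.ofReal (φ ((n : ℝ) - (1 - q) / q)) * ENNReal.ofReal (w n)
      = ENNReal.ofReal (w n * φ ((n : ℝ) - (1 - q) / q)) := by
    intro n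
    rw [← ENNReal.ofReal_mul (hφ0 _), mul_comm]
  by_cases hT : (∑' n : ℕ, ENNReal.ofReal (φ ((n : ℝ) - (1 - q) / q)) * ENNReal.ofReal (w n)) = ⊤
  · rw [hT]; exact le_top
  · rw [tsum_congr heq] at hT ⊢
    have hsum : Summable (fun n => w n * φ ((n : ℝ) - (1 - q) / q)) := by
      have h1 := ENNReal.summable_toReal hT
      refine h1.congr fun n => ?_
      rw [ENNReal.toReal_ofReal (mul_nonneg (hwn n) (hφ0 _))]
    have hmean : HasSum (fun n => w n * ((n : ℝ) - (1 - q) / q)) (1 * 0) := by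
      have h2 := (hasSum_geom_mean hq hq1).sub ((hasSum_geom_pmf hq hq1).mul_left ((1 - q) / q))
      rw [show (1 - q) / q - (1 - q) / q * 1 = 1 * 0 by ring] at h2
      rw [show (fun n : ℕ => w n * ((n : ℝ) - (1 - q) / q))
          = (fun n : ℕ => (n : ℝ) * (q * (1 - q) ^ n) - (1 - q) / q * (q * (1 - q) ^ n))
          from funext fun n => by simp only [hw]; ring]
      exact h2
    have hJ := jensen_tsum hφ w (fun n => (n : ℝ) - (1 - q) / q) hwn 1 0
      (hasSum_geom_pmf hq hq1) hmean hsum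
    rw [one_mul] at hJ
    calc ENNReal.ofReal (φ 0) ≤ ENNReal.ofReal (∑' n, w n * φ ((n : ℝ) - (1 - q) / q)) :=
        ENNReal.ofReal_le_ofReal hJ
      _ = ∑' n, ENNReal.ofReal (w n * φ ((n : ℝ) - (1 - q) / q)) :=
        ENNReal.ofReal_tsum_of_nonneg (fun n => mul_nonneg (hwn n) (hφ0 _)) hsum
/-- Convex ordering of centered geometric distributions: for `0 < q ≤ r ≤ 1` and
any nonnegative convex `φ`, `E[φ(W_r - E W_r)] ≤ E[φ(W_q - E W_q)]`, where `W_p`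
is geometric with parameter `p` on `{0,1,2,…}` (so `E W_p = (1-p)/p`). -/
theorem geometric_convex_order (q r : ℝ) (hq : 0 < q) (hqr : q ≤ r) (hr : r ≤ 1)
    (Ω : Type*) [MeasurableSpace Ω] (μ : Measure Ω) [IsProbabilityMeasure μ]
    (Wq Wr : Ω → ℕ) (hWqm : Measurable Wq) (hWrm : Measurable Wr)
    (hWq : ∀ m : ℕ, μ {ω | Wq ω = m} = ENNReal.ofReal (q * (1 - q) ^ m))
    (hWr : ∀ m : ℕ, μ {ω | Wr ω = m} = ENNReal.ofReal (r * (1 - r) ^ m))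
    (φ : ℝ → ℝ) (hφ : ConvexOn ℝ Set.univ φ) (hφ0 : ∀ x, 0 ≤ φ x) :
    ∫⁻ ω, ENNReal.ofReal (φ ((Wr ω : ℝ) - (1 - r) / r)) ∂μ
      ≤ ∫⁻ ω, ENNReal.ofReal (φ ((Wq ω : ℝ) - (1 - q) / q)) ∂μ := by
  have hq1 : q ≤ 1 := le_trans hqr hr
  have hr0 : 0 < r := lt_of_lt_of_le hq hqr
  have hL : ∫⁻ ω, ENNReal.ofReal (φ ((Wr ω : ℝ) - (1 - r) / r)) ∂μ
      = ∑' m : ℕ, ENNReal.ofReal (φ ((m : ℝ) - (1 - r) / r)) * ENNReal.ofReal (r * (1 - r) ^ m) := by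
    rw [lintegral_geom μ Wr hWrm (fun m : ℕ => ENNReal.ofReal (φ ((m : ℝ) - (1 - r) / r)))]
    exact tsum_congr fun m => by rw [hWr m]
  have hR : ∫⁻ ω, ENNReal.ofReal (φ ((Wq ω : ℝ) - (1 - q) / q)) ∂μ
      = ∑' n : ℕ, ENNReal.ofReal (φ ((n : ℝ) - (1 - q) / q)) * ENNReal.ofReal (q * (1 - q) ^ n) := by
    rw [lintegral_geom μ Wq hWqm (fun n : ℕ => ENNReal.ofReal (φ ((n : ℝ) - (1 - q) / q)))]
    exact tsum_congr fun n => by rw [hWq n]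
  rw [hL, hR]
  rcases eq_or_lt_of_le hr with hr1 | hr1
  · -- case r = 1
    subst hr1
    have hLeq : (∑' m : ℕ, ENNReal.ofReal (φ ((m : ℝ) - (1 - 1) / 1))
        * ENNReal.ofReal (1 * (1 - 1) ^ m)) = ENNReal.ofReal (φ 0) := by
      rw [tsum_eq_single 0 (fun m hm => by norm_num [zero_pow hm])]
      norm_num
    rw [hLeq]
    exact stepB hq hq1 hφ hφ0
  · -- case r < 1
    have hqlt1 : q < 1 := lt_of_le_of_lt hqr hr1
    have hwq : ∀ n : ℕ, (0:ℝ) ≤ q * (1 - q) ^ n := by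
      intro n
      have : (0:ℝ) ≤ 1 - q := by linarith
      positivity
    have hwr : ∀ m : ℕ, (0:ℝ) ≤ r * (1 - r) ^ m := by
      intro m
      have : (0:ℝ) ≤ 1 - r := by linarith
      positivity
    have heqg : ∀ n : ℕ, ENNReal.ofReal (φ ((n : ℝ) - (1 - q) / q)) * ENNReal.ofReal (q * (1 - q) ^ n)
        = ENNReal.ofReal (q * (1 - q) ^ n * φ ((n : ℝ) - (1 - q) / q)) := by
      intro n
      rw [← ENNReal.ofReal_mul (hφ0 _), mul_comm]
    set T := ∑' n : ℕ, ENNReal.ofReal (φ ((n : ℝ) - (1 - q) / q)) * ENNReal.ofReal (q * (1 - q) ^ n)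
      with hTdef
    by_cases htop : T = ⊤
    · rw [htop]; exact le_top
    have hgsum : Summable (fun n : ℕ => q * (1 - q) ^ n * φ ((n : ℝ) - (1 - q) / q)) := by
      have h1 : (∑' n : ℕ, ENNReal.ofReal (q * (1 - q) ^ n * φ ((n : ℝ) - (1 - q) / q))) ≠ ⊤ := by
        rw [← tsum_congr heqg]
        exact htop
      refine (ENNReal.summable_toReal h1).congr fun n => ?_
      rw [ENNReal.toReal_ofReal (mul_nonneg (hwq n) (hφ0 _))]
    -- Step C: per-m conditional Jensen through the thinning kernel
    have hstepC : ∀ m : ℕ,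
        ENNReal.ofReal (φ ((r / q) * ((m : ℝ) - (1 - r) / r))) * ENNReal.ofReal (r * (1 - r) ^ m)
          ≤ ∑' n : ℕ, ENNReal.ofReal (geomJ q r m n * φ ((n : ℝ) - (1 - q) / q)) := by
      intro m
      have hwn : ∀ n, 0 ≤ geomJ q r m n := fun n => geomJ_nonneg hq hqr hr1 m n
      have hφsum : Summable (fun n => geomJ q r m n * φ ((n : ℝ) - (1 - q) / q)) := by
        refine Summable.of_nonneg_of_le (fun n => mul_nonneg (hwn n) (hφ0 _))
          (fun n => mul_le_mul_of_nonneg_right (geomJ_le hq hqr hr1 m n) (hφ0 _)) hgsum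
      have hmean : HasSum (fun n => geomJ q r m n * ((n : ℝ) - (1 - q) / q))
          ((r * (1 - r) ^ m) * ((r / q) * ((m : ℝ) - (1 - r) / r))) := by
        have h2 := (geomJ_mul_hasSum hq hqr hr1 m).sub
          ((geomJ_hasSum hq hqr hr1 m).mul_left ((1 - q) / q))
        rw [show (fun n => geomJ q r m n * ((n : ℝ) - (1 - q) / q))
            = fun n => geomJ q r m n * (n : ℝ) - (1 - q) / q * geomJ q r m n
            from funext fun n => by ring]
        convert h2 using 1
        · rfl
        field_simp
        ring
      have hJ := jensen_tsum hφ (geomJ q r m) (fun n => (n : ℝ) - (1 - q) / q) hwn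
        (r * (1 - r) ^ m) ((r / q) * ((m : ℝ) - (1 - r) / r))
        (geomJ_hasSum hq hqr hr1 m) hmean hφsum
      calc ENNReal.ofReal (φ ((r / q) * ((m : ℝ) - (1 - r) / r))) * ENNReal.ofReal (r * (1 - r) ^ m)
          = ENNReal.ofReal ((r * (1 - r) ^ m) * φ ((r / q) * ((m : ℝ) - (1 - r) / r))) := by
            rw [← ENNReal.ofReal_mul (hφ0 _), mul_comm]
        _ ≤ ENNReal.ofReal (∑' n, geomJ q r m n * φ ((n : ℝ) - (1 - q) / q)) :=
            ENNReal.ofReal_le_ofReal hJ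
        _ = ∑' n : ℕ, ENNReal.ofReal (geomJ q r m n * φ ((n : ℝ) - (1 - q) / q)) :=
            ENNReal.ofReal_tsum_of_nonneg (fun n => mul_nonneg (hwn n) (hφ0 _)) hφsum
    -- the double sum evaluates to T
    have hswap : (∑' (m : ℕ) (n : ℕ), ENNReal.ofReal (geomJ q r m n * φ ((n : ℝ) - (1 - q) / q))) = T := by
      rw [ENNReal.tsum_comm]
      refine tsum_congr fun n => ?_
      rw [tsum_eq_sum (s := Finset.range (n + 1)) (fun m hm => by
        rw [geomJ_eq_zero (by simpa [Nat.lt_succ_iff, not_le] using hm : n < m), zero_mul,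
          ENNReal.ofReal_zero])]
      rw [← ENNReal.ofReal_sum_of_nonneg
        (fun m _ => mul_nonneg (geomJ_nonneg hq hqr hr1 m n) (hφ0 _))]
      rw [← Finset.sum_mul, geomJ_sum_eq hq hqr hr1 n]
      exact (heqg n).symm
    -- Step A pointwise
    have ht0 : (0:ℝ) ≤ q / r := by positivity
    have ht1 : q / r ≤ 1 := (div_le_one hr0).2 hqr
    have ht2 : (0:ℝ) ≤ 1 - q / r := by linarith
    have hstepA : ∀ m : ℕ,
        ENNReal.ofReal (φ ((m : ℝ) - (1 - r) / r)) * ENNReal.ofReal (r * (1 - r) ^ m)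
          ≤ ENNReal.ofReal (q / r)
              * (ENNReal.ofReal (φ ((r / q) * ((m : ℝ) - (1 - r) / r))) * ENNReal.ofReal (r * (1 - r) ^ m))
            + ENNReal.ofReal (1 - q / r)
              * (ENNReal.ofReal (φ 0) * ENNReal.ofReal (r * (1 - r) ^ m)) := by
      intro m
      have hx := convex_scale hφ ht0 ht1 ((r / q) * ((m : ℝ) - (1 - r) / r))
      rw [show (q / r) * ((r / q) * ((m : ℝ) - (1 - r) / r)) = (m : ℝ) - (1 - r) / r by
        field_simp] at hx
      calc ENNReal.ofReal (φ ((m : ℝ) - (1 - r) / r)) * ENNReal.ofReal (r * (1 - r) ^ m)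
          ≤ ENNReal.ofReal (q / r * φ ((r / q) * ((m : ℝ) - (1 - r) / r)) + (1 - q / r) * φ 0)
              * ENNReal.ofReal (r * (1 - r) ^ m) :=
            mul_le_mul_left (ENNReal.ofReal_le_ofReal hx) _
        _ = _ := by
            rw [ENNReal.ofReal_add (mul_nonneg ht0 (hφ0 _)) (mul_nonneg ht2 (hφ0 _)),
              ENNReal.ofReal_mul ht0, ENNReal.ofReal_mul ht2, add_mul, mul_assoc, mul_assoc]
    -- total mass one
    have hone : (∑' m : ℕ, ENNReal.ofReal (r * (1 - r) ^ m)) = 1 := by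
      rw [← ENNReal.ofReal_tsum_of_nonneg hwr (hasSum_geom_pmf hr0 hr1.le).summable,
        (hasSum_geom_pmf hr0 hr1.le).tsum_eq, ENNReal.ofReal_one]
    have hmid : (∑' m : ℕ, ENNReal.ofReal (φ ((r / q) * ((m : ℝ) - (1 - r) / r)))
        * ENNReal.ofReal (r * (1 - r) ^ m)) ≤ T :=
      le_trans (ENNReal.tsum_le_tsum hstepC) (le_of_eq hswap)
    have hB : ENNReal.ofReal (φ 0) ≤ T := stepB hq hq1 hφ hφ0
    calc (∑' m : ℕ, ENNReal.ofReal (φ ((m : ℝ) - (1 - r) / r)) * ENNReal.ofReal (r * (1 - r) ^ m))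
        ≤ ∑' m : ℕ, (ENNReal.ofReal (q / r)
              * (ENNReal.ofReal (φ ((r / q) * ((m : ℝ) - (1 - r) / r))) * ENNReal.ofReal (r * (1 - r) ^ m))
            + ENNReal.ofReal (1 - q / r)
              * (ENNReal.ofReal (φ 0) * ENNReal.ofReal (r * (1 - r) ^ m))) :=
          ENNReal.tsum_le_tsum hstepA
      _ = ENNReal.ofReal (q / r)
              * (∑' m : ℕ, ENNReal.ofReal (φ ((r / q) * ((m : ℝ) - (1 - r) / r))) * ENNReal.ofReal (r * (1 - r) ^ m))
            + ENNReal.ofReal (1 - q / r)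
              * (ENNReal.ofReal (φ 0) * ∑' m : ℕ, ENNReal.ofReal (r * (1 - r) ^ m)) := by
          rw [ENNReal.tsum_add, ENNReal.tsum_mul_left, ENNReal.tsum_mul_left, ENNReal.tsum_mul_left]
      _ ≤ ENNReal.ofReal (q / r) * T + ENNReal.ofReal (1 - q / r) * (ENNReal.ofReal (φ 0) * 1) := by
          exact add_le_add (mul_le_mul_right hmid _) (mul_le_mul_right (by rw [hone]) _)
      _ ≤ ENNReal.ofReal (q / r) * T + ENNReal.ofReal (1 - q / r) * T := by
          refine add_le_add_right (mul_le_mul_right (?_ : ENNReal.ofReal (φ 0) * 1 ≤ T) _) _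
          rw [mul_one]
          exact hB
      _ = T := by
          rw [← add_mul, ← ENNReal.ofReal_add ht0 ht2, show q / r + (1 - q / r) = 1 by ring,
            ENNReal.ofReal_one, one_mul]
end

section
/- For λ ∈ ℝ, κ ≥ 1 and 0 < q ≤ r ≤ 1, with W_q, W_r geometric with parameters q, r: E[e^{λ(W_r - E[W_r])} κ^{W_r}] ≤ E[e^{λ(W_q - E[W_q])} κ^{W_q}] (whenever the right-hand side is finite). -/
open MeasureTheory

lemma key_ineq (p c lam : ℝ) (hp : 0 < p) (hp1 : p ≤ 1) (hc0 : 0 ≤ c)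
    (hc : 1 + lam ≤ c) (hD : 0 < 1 - c + c * p) :
    lam * (1 - c + c * p) ≤ p * (c - 1) := by
  rcases le_or_gt 0 (lam * (c - 1)) with h | h
  · nlinarith [mul_nonneg h (by linarith : (0:ℝ) ≤ 1 - p),
      mul_nonneg hp.le (by linarith : (0:ℝ) ≤ c - 1 - lam)]
  · have hl : lam < 0 := by nlinarith
    have hc1 : 1 < c := by nlinarith
    nlinarith [mul_nonneg hp.le (by linarith : (0:ℝ) ≤ c - 1),
      mul_nonpos_of_nonpos_of_nonneg hl.le hD.le]

lemma geom_F_antitone (q r c lam : ℝ) (hq : 0 < q) (hqr : q ≤ r) (hr : r ≤ 1)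
    (hc0 : 0 ≤ c) (hc : 1 + lam ≤ c) (hxq : (1 - q) * c < 1) :
    r * Real.exp (lam - lam * r⁻¹) * (1 - c + c * r)⁻¹
      ≤ q * Real.exp (lam - lam * q⁻¹) * (1 - c + c * q)⁻¹ := by
  set F : ℝ → ℝ := fun p => p * Real.exp (lam - lam * p⁻¹) / (1 - c + c * p) with hF
  have hD : ∀ p ∈ Set.Icc q r, 0 < 1 - c + c * p := by
    intro p hp
    have h1 : (1 - p) * c ≤ (1 - q) * c :=
      mul_le_mul_of_nonneg_right (by linarith [hp.1]) hc0
    nlinarith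
  have hderiv : ∀ p, 0 < p → 0 < 1 - c + c * p →
      HasDerivAt F (Real.exp (lam - lam * p⁻¹) *
        ((p + lam) * (1 - c + c * p) - p ^ 2 * c) / (p * (1 - c + c * p) ^ 2)) p := by
    intro p hp0 hpD
    have h1 : HasDerivAt (fun x : ℝ => lam - lam * x⁻¹) (0 - lam * -(p ^ 2)⁻¹) p :=
      (hasDerivAt_const p lam).sub ((hasDerivAt_inv hp0.ne').const_mul lam)
    have h2 := h1.exp
    have h3 : HasDerivAt (fun x : ℝ => x * Real.exp (lam - lam * x⁻¹))
        (1 * Real.exp (lam - lam * p⁻¹) +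
          p * (Real.exp (lam - lam * p⁻¹) * (0 - lam * -(p ^ 2)⁻¹))) p :=
      (hasDerivAt_id p).mul h2
    have h4 : HasDerivAt (fun x : ℝ => 1 - c + c * x) c p := by
      simpa using ((hasDerivAt_id p).const_mul c).const_add (1 - c)
    have h5 := h3.div h4 hpD.ne'
    convert h5 using 1
    · rfl
    · rfl
    · rfl
    have hp0' : p ≠ 0 := hp0.ne'
    have hpD' : 1 - c + c * p ≠ 0 := hpD.ne'
    field_simp
    ring
  have hmono : AntitoneOn F (Set.Icc q r) := by
    apply antitoneOn_of_deriv_nonpos (convex_Icc q r)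
    · intro p hp
      exact (hderiv p (lt_of_lt_of_le hq hp.1) (hD p hp)).continuousAt.continuousWithinAt
    · intro p hp
      rw [interior_Icc] at hp
      have hp' : p ∈ Set.Icc q r := Set.mem_of_mem_of_subset hp Set.Ioo_subset_Icc_self
      exact (hderiv p (lt_of_lt_of_le hq hp'.1) (hD p hp')).differentiableAt.differentiableWithinAt
    · intro p hp
      rw [interior_Icc] at hp
      have hp' : p ∈ Set.Icc q r := Set.mem_of_mem_of_subset hp Set.Ioo_subset_Icc_self
      have hp0 : 0 < p := lt_of_lt_of_le hq hp'.1
      have hpD := hD p hp'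
      rw [(hderiv p hp0 hpD).deriv]
      apply div_nonpos_of_nonpos_of_nonneg
      · apply mul_nonpos_of_nonneg_of_nonpos (Real.exp_pos _).le
        have := key_ineq p c lam hp0 (le_trans hp'.2 hr) hc0 hc hpD
        nlinarith
      · positivity
  have hqr1 : F r ≤ F q := hmono ⟨le_rfl, hqr⟩ ⟨hqr, le_rfl⟩ hqr
  simp only [hF, div_eq_mul_inv] at hqr1
  exact hqr1

lemma geom_lintegral_eq (Ω : Type*) [MeasurableSpace Ω] (μ : Measure Ω)
    (W : Ω → ℕ) (hWm : Measurable W) (p lam κ : ℝ) (hp : 0 < p) (hp1 : p ≤ 1) (hκ : 1 ≤ κ)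
    (hW : ∀ m : ℕ, μ {ω | W ω = m} = ENNReal.ofReal (p * (1 - p) ^ m)) :
    ∫⁻ ω, ENNReal.ofReal (Real.exp (lam * ((W ω : ℝ) - (1 - p) / p)) * κ ^ (W ω)) ∂μ
      = ENNReal.ofReal (p * Real.exp (lam - lam * p⁻¹)) *
        (1 - ENNReal.ofReal ((1 - p) * (Real.exp lam * κ)))⁻¹ := by
  have hstep : ∫⁻ ω, ENNReal.ofReal (Real.exp (lam * ((W ω : ℝ) - (1 - p) / p)) * κ ^ (W ω)) ∂μ
      = ∑' m : ℕ, ENNReal.ofReal (Real.exp (lam * ((m : ℝ) - (1 - p) / p)) * κ ^ m) *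
          μ {ω | W ω = m} := by
    rw [← lintegral_map (f := fun m : ℕ =>
        ENNReal.ofReal (Real.exp (lam * ((m : ℝ) - (1 - p) / p)) * κ ^ m))
      measurable_from_top hWm, lintegral_countable']
    congr 1
    ext m
    rw [Measure.map_apply hWm (measurableSet_singleton m)]
    rfl
  rw [hstep]
  have hκ0 : (0:ℝ) ≤ κ := by linarith
  have hx0 : (0:ℝ) ≤ (1 - p) * (Real.exp lam * κ) := by
    apply mul_nonneg (by linarith) (by positivity)
  have hterm : ∀ m : ℕ,
      ENNReal.ofReal (Real.exp (lam * ((m:ℝ) - (1-p)/p)) * κ ^ m) * μ {ω | W ω = m}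
      = ENNReal.ofReal (p * Real.exp (lam - lam * p⁻¹)) *
          ENNReal.ofReal ((1-p) * (Real.exp lam * κ)) ^ m := by
    intro m
    rw [hW m, ← ENNReal.ofReal_pow hx0, ← ENNReal.ofReal_mul (by positivity),
        ← ENNReal.ofReal_mul (by positivity)]
    congr 1
    have harg : lam * ((m:ℝ) - (1-p)/p) = (m:ℝ) * lam + (lam - lam * p⁻¹) := by
      field_simp; ring
    rw [harg, Real.exp_add, Real.exp_nat_mul, mul_pow, mul_pow]
    ring
  rw [tsum_congr hterm, ENNReal.tsum_mul_left, ENNReal.tsum_geometric]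

/-- For `λ ∈ ℝ`, `κ ≥ 1` and `0 < q ≤ r ≤ 1`, with `W_p` geometric with
parameter `p` on `{0,1,2,…}` (so `E W_p = (1-p)/p`):
`E[e^{λ(W_r - E W_r)} κ^{W_r}] ≤ E[e^{λ(W_q - E W_q)} κ^{W_q}]`. -/
theorem geometric_exp_moment_order (q r : ℝ) (hq : 0 < q) (hqr : q ≤ r) (hr : r ≤ 1)
    (lam κ : ℝ) (hκ : 1 ≤ κ)
    (Ω : Type*) [MeasurableSpace Ω] (μ : Measure Ω) [IsProbabilityMeasure μ]
    (Wq Wr : Ω → ℕ) (hWqm : Measurable Wq) (hWrm : Measurable Wr)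
    (hWq : ∀ m : ℕ, μ {ω | Wq ω = m} = ENNReal.ofReal (q * (1 - q) ^ m))
    (hWr : ∀ m : ℕ, μ {ω | Wr ω = m} = ENNReal.ofReal (r * (1 - r) ^ m)) :
    ∫⁻ ω, ENNReal.ofReal (Real.exp (lam * ((Wr ω : ℝ) - (1 - r) / r)) * κ ^ (Wr ω)) ∂μ
      ≤ ∫⁻ ω, ENNReal.ofReal (Real.exp (lam * ((Wq ω : ℝ) - (1 - q) / q)) * κ ^ (Wq ω)) ∂μ := by
  have hq1 : q ≤ 1 := le_trans hqr hr
  have hr0 : 0 < r := lt_of_lt_of_le hq hqr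
  set c : ℝ := Real.exp lam * κ with hcdef
  have hc0 : 0 ≤ c := by positivity
  have hc : 1 + lam ≤ c := by
    have h1 : lam + 1 ≤ Real.exp lam := Real.add_one_le_exp lam
    have h2 : Real.exp lam ≤ Real.exp lam * κ :=
      le_mul_of_one_le_right (Real.exp_pos lam).le hκ
    linarith
  rw [geom_lintegral_eq Ω μ Wr hWrm r lam κ hr0 hr hκ hWr,
      geom_lintegral_eq Ω μ Wq hWqm q lam κ hq hq1 hκ hWq]
  rcases le_or_gt 1 ((1 - q) * c) with hcase | hcase
  · -- RHS is infinite
    have h0 : (1 : ENNReal) - ENNReal.ofReal ((1 - q) * c) = 0 :=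
      tsub_eq_zero_of_le (ENNReal.one_le_ofReal.mpr hcase)
    rw [h0, ENNReal.inv_zero, ENNReal.mul_top]
    · exact le_top
    · simp only [ne_eq, ENNReal.ofReal_eq_zero, not_le]
      positivity
  · -- both sides finite: reduce to real inequality
    have hxr : (1 - r) * c < 1 := by
      have : (1 - r) * c ≤ (1 - q) * c :=
        mul_le_mul_of_nonneg_right (by linarith) hc0
      linarith
    have hconv : ∀ p : ℝ, 0 < p → p ≤ 1 → (1 - p) * c < 1 →
        ENNReal.ofReal (p * Real.exp (lam - lam * p⁻¹)) *
          (1 - ENNReal.ofReal ((1 - p) * c))⁻¹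
        = ENNReal.ofReal (p * Real.exp (lam - lam * p⁻¹) * (1 - c + c * p)⁻¹) := by
      intro p hp0 hp1 hxp
      have hDp : 0 < 1 - c + c * p := by nlinarith
      have h1 : (1 : ENNReal) - ENNReal.ofReal ((1 - p) * c)
          = ENNReal.ofReal (1 - c + c * p) := by
        rw [← ENNReal.ofReal_one, ← ENNReal.ofReal_sub _ (mul_nonneg (by linarith) hc0)]
        ring_nf
      rw [h1, ← ENNReal.ofReal_inv_of_pos hDp,
          ← ENNReal.ofReal_mul (by positivity)]
    rw [hconv q hq hq1 hcase, hconv r hr0 hr hxr]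
    exact ENNReal.ofReal_le_ofReal
      (geom_F_antitone q r c lam hq hqr hr hc0 hc hcase)
end

section
/- Let f(t) = Σ_{k=0}^∞ (1-α)α^k exp(-β^{-k} t) for t > 0, with 0 < α < 1 < β and ρ = -log(α)/log(β). Then there exist constants 0 < C₁ < C₂ < ∞ such that C₁ t^{-ρ} ≤ f(t) ≤ C₂ t^{-ρ} for all t > 1. -/
open Real Filter Finset


/-- The tail `f(t) = Σ_{k≥0}(1-α)α^k e^{-β^{-k}t}` of an exponential with random
geometric rate is bounded above and below by constant multiples of `t^{-ρ}`,
`ρ = -log α/log β`. -/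
theorem tail_polynomial_bounds (α β ρ : ℝ) (hα : 0 < α) (hα1 : α < 1)
    (hβ : 1 < β) (hρ : ρ = -Real.log α / Real.log β) :
    ∃ C₁ C₂ : ℝ, 0 < C₁ ∧ C₁ < C₂ ∧
      ∀ t : ℝ, 1 < t →
        C₁ * Real.rpow t (-ρ)
            ≤ ∑' k : ℕ, (1 - α) * α ^ k * Real.exp (-(β ^ k)⁻¹ * t) ∧
          ∑' k : ℕ, (1 - α) * α ^ k * Real.exp (-(β ^ k)⁻¹ * t)
            ≤ C₂ * Real.rpow t (-ρ) := by
  have hβ0 : (0:ℝ) < β := lt_trans one_pos hβ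
  have hlogβ : 0 < Real.log β := Real.log_pos hβ
  have hlogα : Real.log α < 0 := Real.log_neg hα hα1
  have hρ0 : 0 < ρ := by
    rw [hρ]; exact div_pos (by linarith) hlogβ
  have hkey : -ρ * Real.log β = Real.log α := by
    rw [hρ]; field_simp
  have hαβρ : α = β ^ (-ρ) := by
    rw [Real.rpow_def_of_pos hβ0, mul_comm, hkey, Real.exp_log hα]
  -- α ^ n = (β ^ n) ^ (-ρ)
  have hpow : ∀ n : ℕ, α ^ n = ((β : ℝ) ^ n) ^ (-ρ) := by
    intro n
    rw [← Real.rpow_natCast β n, ← Real.rpow_mul hβ0.le, mul_comm,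
      Real.rpow_mul hβ0.le, Real.rpow_natCast, ← hαβρ]
  have hα' : (0:ℝ) < 1 - α := by linarith
  -- summability of the series defining f, for each t ≥ 0
  have hfsum : ∀ t : ℝ, 0 ≤ t →
      Summable (fun k : ℕ => (1 - α) * α ^ k * Real.exp (-(β ^ k)⁻¹ * t)) := by
    intro t ht
    apply Summable.of_nonneg_of_le (fun k => by positivity)
      (fun k => ?_) (((summable_geometric_of_lt_one hα.le hα1).mul_left (1 - α)))
    have h1 : Real.exp (-(β ^ k)⁻¹ * t) ≤ 1 := by
      rw [Real.exp_le_one_iff]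
      have : (0:ℝ) < β ^ k := pow_pos hβ0 k
      have : 0 ≤ (β ^ k)⁻¹ * t := by positivity
      linarith
    calc (1 - α) * α ^ k * Real.exp (-(β ^ k)⁻¹ * t)
        ≤ (1 - α) * α ^ k * 1 := by
          apply mul_le_mul_of_nonneg_left h1 (by positivity)
      _ = (1 - α) * α ^ k := by ring
  -- the auxiliary series  g m = (α^m)⁻¹ e^{-β^m}
  set g : ℕ → ℝ := fun m => (α ^ m)⁻¹ * Real.exp (-(β ^ m)) with hg
  have hgpos : ∀ m, 0 < g m := fun m => by positivity
  have hgsum : Summable g := by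
    apply summable_of_ratio_norm_eventually_le (r := 1/2) (by norm_num)
    have htend : Tendsto (fun m : ℕ => Real.exp (-((β - 1) * β ^ m))) atTop (nhds 0) := by
      have h1 : Tendsto (fun m : ℕ => (β - 1) * β ^ m) atTop atTop :=
        (tendsto_pow_atTop_atTop_of_one_lt hβ).const_mul_atTop (by linarith)
      exact Real.tendsto_exp_neg_atTop_nhds_zero.comp h1
    have hev : ∀ᶠ m : ℕ in atTop, Real.exp (-((β - 1) * β ^ m)) < α / 2 :=
      htend.eventually_lt_const (by positivity)
    filter_upwards [hev] with m hm
    rw [Real.norm_of_nonneg (hgpos _).le, Real.norm_of_nonneg (hgpos _).le]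
    have : g (m + 1) = α⁻¹ * Real.exp (-((β - 1) * β ^ m)) * g m := by
      simp only [hg, pow_succ]
      rw [show (-(β ^ m * β)) = -((β - 1) * β ^ m) + -(β ^ m) by ring, Real.exp_add,
        mul_inv]
      ring
    rw [this]
    have hgm := (hgpos m).le
    calc α⁻¹ * Real.exp (-((β - 1) * β ^ m)) * g m
        ≤ α⁻¹ * (α / 2) * g m := by
          apply mul_le_mul_of_nonneg_right _ hgm
          exact mul_le_mul_of_nonneg_left hm.le (by positivity)
      _ = 1 / 2 * g m := by field_simp
  set S : ℝ := ∑' m, g m with hS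
  have hS0 : 0 < S := Summable.tsum_pos hgsum (fun m => (hgpos m).le) 0 (hgpos 0)
  -- the constants
  refine ⟨(1 - α) * (Real.exp 1)⁻¹ * β ^ (-ρ), 1 + (1 - α) / α * S, by positivity, ?_, ?_⟩
  · have h1 : (1 - α) * (Real.exp 1)⁻¹ * β ^ (-ρ) < 1 := by
      have e1 : (Real.exp 1)⁻¹ < 1 := by
        rw [inv_lt_one_iff₀]; right; rw [← Real.exp_zero, Real.exp_lt_exp]; norm_num
      have e2 : (β:ℝ) ^ (-ρ) ≤ 1 := by
        rw [← Real.rpow_zero β]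
        exact Real.rpow_le_rpow_of_exponent_le hβ.le (by linarith)
      have e3 : (0:ℝ) < (Real.exp 1)⁻¹ := by positivity
      have e4 : (0:ℝ) < (β:ℝ) ^ (-ρ) := Real.rpow_pos_of_pos hβ0 (-ρ)
      have h5 : (1 - α) * (Real.exp 1)⁻¹ ≤ (Real.exp 1)⁻¹ := by nlinarith
      calc (1 - α) * (Real.exp 1)⁻¹ * β ^ (-ρ)
          ≤ (1 - α) * (Real.exp 1)⁻¹ * 1 := mul_le_mul_of_nonneg_left e2 (by positivity)
        _ = (1 - α) * (Real.exp 1)⁻¹ := mul_one _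
        _ ≤ (Real.exp 1)⁻¹ := h5
        _ < 1 := e1
    have h2 : (1:ℝ) < 1 + (1 - α) / α * S := by
      have : 0 < (1 - α) / α * S := by positivity
      linarith
    linarith
  intro t ht
  have ht0 : 0 < t := by linarith
  have htρ : 0 < t ^ (-ρ) := Real.rpow_pos_of_pos ht0 _
  set x : ℝ := Real.logb β t with hx
  have hx0 : 0 < x := Real.logb_pos hβ ht
  set n : ℕ := ⌈x⌉₊ with hn
  have hn1 : 1 ≤ n := Nat.one_le_iff_ne_zero.mpr (by
    simp only [hn, ne_eq, Nat.ceil_eq_zero, not_le]; exact hx0)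
  have hβx : β ^ x = t := Real.rpow_logb hβ0 (by linarith) ht0
  have hβn_ge : t ≤ β ^ n := by
    rw [← hβx, ← Real.rpow_natCast β n]
    exact Real.rpow_le_rpow_left_iff hβ |>.mpr (Nat.le_ceil x)
  have hβn_le : (β:ℝ) ^ n ≤ β * t := by
    rw [← hβx, ← Real.rpow_natCast β n]
    calc (β:ℝ) ^ (n:ℝ) ≤ β ^ (x + 1) := by
          exact Real.rpow_le_rpow_left_iff hβ |>.mpr (Nat.ceil_lt_add_one hx0.le).le
      _ = β * β ^ x := by rw [Real.rpow_add hβ0, Real.rpow_one]; ring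
  -- α^n ≤ t^{-ρ}
  have hαn_le : α ^ n ≤ t ^ (-ρ) := by
    rw [hpow n]
    exact Real.rpow_le_rpow_of_nonpos ht0 hβn_ge (by linarith)
  constructor
  · -- lower bound: single term k = n
    have hterm : (1 - α) * (Real.exp 1)⁻¹ * β ^ (-ρ) * t ^ (-ρ)
        ≤ (1 - α) * α ^ n * Real.exp (-(β ^ n)⁻¹ * t) := by
      have hαn_ge : β ^ (-ρ) * t ^ (-ρ) ≤ α ^ n := by
        rw [hpow n, ← Real.mul_rpow hβ0.le ht0.le]
        exact Real.rpow_le_rpow_of_nonpos (by positivity) hβn_le (by linarith)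
      have hexp : (Real.exp 1)⁻¹ ≤ Real.exp (-(β ^ n)⁻¹ * t) := by
        rw [← Real.exp_neg, Real.exp_le_exp]
        have hβnpos : (0:ℝ) < β ^ n := pow_pos hβ0 n
        have : (β ^ n)⁻¹ * t ≤ 1 := by
          rw [inv_mul_le_iff₀ hβnpos, mul_one]; exact hβn_ge
        linarith
      calc (1 - α) * (Real.exp 1)⁻¹ * β ^ (-ρ) * t ^ (-ρ)
          = (1 - α) * (β ^ (-ρ) * t ^ (-ρ)) * (Real.exp 1)⁻¹ := by ring
        _ ≤ (1 - α) * α ^ n * Real.exp (-(β ^ n)⁻¹ * t) := by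
            apply mul_le_mul (mul_le_mul_of_nonneg_left hαn_ge hα'.le) hexp
              (by positivity) (by positivity)
    refine hterm.trans ?_
    exact Summable.le_tsum (hfsum t ht0.le) n (fun k _ => by positivity)
  · -- upper bound
    have hsplit := Summable.sum_add_tsum_nat_add n (hfsum t ht0.le)
    rw [← hsplit]
    have htail : (∑' k : ℕ, (1 - α) * α ^ (k + n) * Real.exp (-(β ^ (k + n))⁻¹ * t))
        ≤ t ^ (-ρ) := by
      have h1 : (∑' k : ℕ, (1 - α) * α ^ (k + n) * Real.exp (-(β ^ (k + n))⁻¹ * t))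
          ≤ ∑' k : ℕ, (1 - α) * α ^ n * α ^ k := by
        apply Summable.tsum_le_tsum _ ((hfsum t ht0.le).comp_injective (add_left_injective n))
          (((summable_geometric_of_lt_one hα.le hα1).mul_left _))
        intro k
        have : Real.exp (-(β ^ (k + n))⁻¹ * t) ≤ 1 := by
          rw [Real.exp_le_one_iff]
          have h2 : (0:ℝ) < β ^ (k + n) := pow_pos hβ0 _
          have : 0 ≤ (β ^ (k + n))⁻¹ * t := by positivity
          linarith
        calc (1 - α) * α ^ (k + n) * Real.exp (-(β ^ (k + n))⁻¹ * t)
            ≤ (1 - α) * α ^ (k + n) * 1 :=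
              mul_le_mul_of_nonneg_left this (by positivity)
          _ = (1 - α) * α ^ n * α ^ k := by rw [pow_add]; ring
      rw [tsum_mul_left, tsum_geometric_of_lt_one hα.le hα1] at h1
      calc _ ≤ (1 - α) * α ^ n * (1 - α)⁻¹ := h1
        _ = α ^ n := by field_simp
        _ ≤ t ^ (-ρ) := hαn_le
    have hhead : (∑ k ∈ Finset.range n, (1 - α) * α ^ k * Real.exp (-(β ^ k)⁻¹ * t))
        ≤ (1 - α) / α * S * t ^ (-ρ) := by
      have hβn1 : (β:ℝ) ^ (n - 1) ≤ t := by
        rw [← hβx, ← Real.rpow_natCast β (n-1)]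
        apply Real.rpow_le_rpow_left_iff hβ |>.mpr
        have h9 : (n - 1 : ℕ) < ⌈x⌉₊ := by omega
        exact_mod_cast (Nat.lt_ceil.mp h9).le
      have hterm : ∀ k ∈ Finset.range n,
          (1 - α) * α ^ k * Real.exp (-(β ^ k)⁻¹ * t)
            ≤ (1 - α) * α ^ (n-1) * g (n - 1 - k) := by
        intro k hk
        have hkn : k ≤ n - 1 := Nat.le_sub_one_of_lt (Finset.mem_range.mp hk)
        have hsplitpow : (β:ℝ) ^ k * β ^ (n - 1 - k) = β ^ (n - 1) := by
          rw [← pow_add]; congr 1; omega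
        have hsplitα : α ^ k * α ^ (n - 1 - k) = α ^ (n - 1) := by
          rw [← pow_add]; congr 1; omega
        have hβk : (0:ℝ) < β ^ k := pow_pos hβ0 k
        have hexp : Real.exp (-(β ^ k)⁻¹ * t) ≤ Real.exp (-(β ^ (n-1-k))) := by
          rw [Real.exp_le_exp]
          have h2 : (β:ℝ) ^ (n-1-k) ≤ (β ^ k)⁻¹ * t := by
            rw [le_inv_mul_iff₀ hβk, hsplitpow]
            exact hβn1
          linarith
        have hαk : α ^ k = α ^ (n-1) * (α ^ (n-1-k))⁻¹ := by
          field_simp [← hsplitα]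
          exact hsplitα
        rw [hαk]
        simp only [hg]
        calc (1-α) * (α^(n-1) * (α^(n-1-k))⁻¹) * Real.exp (-(β^k)⁻¹ * t)
            ≤ (1-α) * (α^(n-1) * (α^(n-1-k))⁻¹) * Real.exp (-(β^(n-1-k))) := by
              apply mul_le_mul_of_nonneg_left hexp (by positivity)
          _ = (1-α) * α^(n-1) * ((α^(n-1-k))⁻¹ * Real.exp (-(β^(n-1-k)))) := by ring
      have hsum1 : (∑ k ∈ Finset.range n, (1 - α) * α ^ k * Real.exp (-(β ^ k)⁻¹ * t))
          ≤ ∑ k ∈ Finset.range n, (1 - α) * α ^ (n-1) * g (n - 1 - k) :=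
        Finset.sum_le_sum hterm
      have hsum2 : (∑ k ∈ Finset.range n, (1 - α) * α ^ (n-1) * g (n - 1 - k))
          = (1 - α) * α ^ (n-1) * ∑ m ∈ Finset.range n, g m := by
        rw [← Finset.mul_sum]
        congr 1
        exact Finset.sum_range_reflect g n
      have hsum3 : ∑ m ∈ Finset.range n, g m ≤ S :=
        Summable.sum_le_tsum _ (fun m _ => (hgpos m).le) hgsum
      have hαn1 : α ^ (n-1) ≤ t ^ (-ρ) / α := by
        rw [le_div_iff₀ hα]
        have h3 : α ^ (n-1) * α = α ^ n := by
          rw [← pow_succ]; congr 1; omega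
        rw [h3]; exact hαn_le
      calc (∑ k ∈ Finset.range n, (1 - α) * α ^ k * Real.exp (-(β ^ k)⁻¹ * t))
          ≤ (1 - α) * α ^ (n-1) * ∑ m ∈ Finset.range n, g m := by rw [← hsum2]; exact hsum1
        _ ≤ (1 - α) * α ^ (n-1) * S := by
            apply mul_le_mul_of_nonneg_left hsum3 (by positivity)
        _ ≤ (1 - α) * (t ^ (-ρ) / α) * S := by
            apply mul_le_mul_of_nonneg_right _ hS0.le
            exact mul_le_mul_of_nonneg_left hαn1 hα'.le
        _ = (1 - α) / α * S * t ^ (-ρ) := by ring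
    calc _ ≤ (1 - α) / α * S * t ^ (-ρ) + t ^ (-ρ) := add_le_add hhead htail
      _ = (1 + (1 - α) / α * S) * t ^ (-ρ) := by ring
end

section
/- With f(t) = Σ_{k≥0}(1-α)α^k e^{-β^{-k}t}, the Mellin transform f*(z) = ∫_0^∞ t^{z-1} f(t) dt converges for 0 < Re(z) < ρ (ρ = -log α/log β) and equals Γ(z)(1-α)/(1-αβ^z). -/
open MeasureTheory Set

lemma ennnorm_tsum_le' (g : ℕ → ℂ) : (‖∑' k, g k‖₊ : ENNReal) ≤ ∑' k, (‖g k‖₊ : ENNReal) := by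
  by_cases h : Summable fun k => ‖g k‖₊
  · rw [← ENNReal.coe_tsum h]
    exact_mod_cast nnnorm_tsum_le h
  · rw [not_not.mp ((not_iff_not.mpr ENNReal.tsum_coe_ne_top_iff_summable).mpr h)]
    exact le_top

set_option maxHeartbeats 1000000 in
/-- The Mellin transform of `f(t) = Σ_{k≥0}(1-α)α^k e^{-β^{-k}t}` converges on
the strip `0 < Re z < ρ` (`ρ = -log α/log β`) and equals `Γ(z)(1-α)/(1-αβ^z)`. -/
theorem mellin_transform_of_tail (α β ρ : ℝ) (hα : 0 < α) (hα1 : α < 1)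
    (hβ : 1 < β) (hρ : ρ = -Real.log α / Real.log β)
    (f : ℝ → ℝ)
    (hf : ∀ t : ℝ, f t = ∑' k : ℕ, (1 - α) * α ^ k * Real.exp (-(β ^ k)⁻¹ * t)) :
    ∀ z : ℂ, 0 < z.re → z.re < ρ →
      IntegrableOn (fun t : ℝ => (t : ℂ) ^ (z - 1) * (f t : ℂ)) (Set.Ioi 0) volume ∧
      ∫ t in Set.Ioi (0 : ℝ), (t : ℂ) ^ (z - 1) * (f t : ℂ)
        = Complex.Gamma z * (1 - α) / (1 - α * (β : ℂ) ^ z) := by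
  intro z hz0 hz1
  have hβ0 : (0:ℝ) < β := lt_trans one_pos hβ
  have hβk : ∀ k : ℕ, (0:ℝ) < (β ^ k)⁻¹ := fun k => by positivity
  -- the ratio q = α β^{Re z} < 1
  have hq0 : (0:ℝ) < α * β ^ z.re := by positivity
  have hq1 : α * β ^ z.re < 1 := by
    have hlogβ : 0 < Real.log β := Real.log_pos hβ
    have h1 : z.re * Real.log β < -Real.log α := by
      have := (lt_div_iff₀ hlogβ).mp (hρ ▸ hz1)
      linarith
    have hlog : Real.log (α * β ^ z.re) < 0 := by
      rw [Real.log_mul hα.ne' (by positivity), Real.log_rpow hβ0]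
      linarith
    exact (Real.log_neg_iff hq0).mp hlog
  have h1α : (0:ℝ) < 1 - α := by linarith
  have htn : ∀ (k : ℕ) (t : ℝ), 0 ≤ (1 - α) * α ^ k * Real.exp (-(β ^ k)⁻¹ * t) := by
    intro k t
    exact mul_nonneg (mul_nonneg h1α.le (pow_nonneg hα.le k)) (Real.exp_nonneg _)
  have hcont : ∀ k : ℕ, Continuous fun t : ℝ => (1 - α) * α ^ k * Real.exp (-(β ^ k)⁻¹ * t) :=
    fun k => continuous_const.mul (Real.continuous_exp.comp (continuous_const.mul continuous_id))
  -- terms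
  set F : ℕ → ℝ → ℂ :=
    fun k t => (t : ℂ) ^ (z - 1) * (((1 - α) * α ^ k * Real.exp (-(β ^ k)⁻¹ * t) : ℝ) : ℂ) with hF
  have hFsum : ∀ t : ℝ, (t : ℂ) ^ (z - 1) * (f t : ℂ) = ∑' k, F k t := by
    intro t
    rw [hf t, Complex.ofReal_tsum, tsum_mul_left]
  -- measurability of each term
  have hmeas : ∀ k : ℕ, AEStronglyMeasurable (F k) (volume.restrict (Ioi 0)) := by
    intro k
    apply AEStronglyMeasurable.mul
    · refine (continuousOn_of_forall_continuousAt fun t ht => ?_).aestronglyMeasurable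
        measurableSet_Ioi
      exact Complex.continuousAt_ofReal_cpow_const _ _ (Or.inr (ne_of_gt ht))
    · exact (Complex.continuous_ofReal.comp (hcont k)).aestronglyMeasurable
  -- real bounds
  set g : ℕ → ℝ → ℝ :=
    fun k t => t ^ (z.re - 1) * ((1 - α) * α ^ k * Real.exp (-(β ^ k)⁻¹ * t)) with hg
  have hnorm : ∀ k : ℕ, ∀ t ∈ Ioi (0:ℝ), ‖F k t‖ = g k t := by
    intro k t ht
    rw [hF, hg]
    rw [norm_mul, Complex.norm_real, Real.norm_eq_abs]
    rw [Complex.norm_cpow_eq_rpow_re_of_pos ht]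
    have : (z - 1).re = z.re - 1 := by simp
    rw [this, abs_of_nonneg (htn k t)]
  have hgint : ∀ k : ℕ, IntegrableOn (g k) (Ioi 0) volume := by
    intro k
    have base : IntegrableOn (fun t : ℝ => t ^ (z.re - 1) * Real.exp (-(β ^ k)⁻¹ * t))
        (Ioi 0) volume := by
      have := integrableOn_rpow_mul_exp_neg_mul_rpow (s := z.re - 1) (p := 1)
        (by linarith) one_pos (hβk k)
      exact this.congr_fun (fun t ht => by simp only [Real.rpow_one]) measurableSet_Ioi
    have h2 : IntegrableOn
        (fun t : ℝ => ((1 - α) * α ^ k) * (t ^ (z.re - 1) * Real.exp (-(β ^ k)⁻¹ * t)))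
        (Ioi 0) volume := base.const_mul _
    exact h2.congr_fun (fun t ht => by ring) measurableSet_Ioi
  have hgval : ∀ k : ℕ, ∫ t in Ioi (0:ℝ), g k t
      = ((1 - α) * Real.Gamma z.re) * (α * β ^ z.re) ^ k := by
    intro k
    have : ∫ t in Ioi (0:ℝ), g k t
        = ((1 - α) * α ^ k) * ∫ t in Ioi (0:ℝ), t ^ (z.re - 1) * Real.exp (-((β ^ k)⁻¹ * t)) := by
      rw [← integral_const_mul]
      exact setIntegral_congr_fun measurableSet_Ioi (fun t ht => by rw [hg]; ring_nf)
    rw [this, Real.integral_rpow_mul_exp_neg_mul_Ioi hz0 (hβk k)]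
    rw [one_div, inv_inv]
    have : (β ^ k : ℝ) ^ z.re = (β ^ z.re) ^ k := by
      rw [← Real.rpow_natCast β k, ← Real.rpow_mul hβ0.le, mul_comm,
        Real.rpow_mul hβ0.le, Real.rpow_natCast]
    rw [this, mul_pow]
    ring
  have hsum : Summable (fun k : ℕ => ((1 - α) * Real.Gamma z.re) * (α * β ^ z.re) ^ k) :=
    (summable_geometric_of_lt_one hq0.le hq1).mul_left _
  -- lintegral bound
  have hgnonneg : ∀ k : ℕ, (0:ℝ→ℝ) ≤ᵐ[volume.restrict (Ioi 0)] g k := by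
    intro k
    filter_upwards [self_mem_ae_restrict (measurableSet_Ioi : MeasurableSet (Ioi (0:ℝ)))]
      with t ht
    exact mul_nonneg (Real.rpow_nonneg (le_of_lt ht) _) (htn k t)
  have hlinval : ∀ k : ℕ, ∫⁻ t in Ioi (0:ℝ), ‖F k t‖₊
      = ENNReal.ofReal (((1 - α) * Real.Gamma z.re) * (α * β ^ z.re) ^ k) := by
    intro k
    calc ∫⁻ t in Ioi (0:ℝ), (‖F k t‖₊ : ENNReal)
        = ∫⁻ t in Ioi (0:ℝ), ENNReal.ofReal (g k t) := by
          refine setLIntegral_congr_fun measurableSet_Ioi (fun t ht => ?_)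
          rw [← hnorm k t ht]
          exact (ofReal_norm _).symm
      _ = ENNReal.ofReal (∫ t in Ioi (0:ℝ), g k t) :=
          (ofReal_integral_eq_lintegral_ofReal (hgint k) (hgnonneg k)).symm
      _ = _ := by rw [hgval k]
  have hlin : ∑' k : ℕ, ∫⁻ t in Ioi (0:ℝ), (‖F k t‖₊ : ENNReal) ≠ ⊤ := by
    rw [tsum_congr hlinval,
      ← ENNReal.ofReal_tsum_of_nonneg (fun k => mul_nonneg
        (mul_nonneg h1α.le (Real.Gamma_nonneg_of_nonneg hz0.le)) (pow_nonneg hq0.le k)) hsum]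
    exact ENNReal.ofReal_ne_top
  -- integrability
  have hwmeas : AEStronglyMeasurable (fun t : ℝ => (t : ℂ) ^ (z - 1) * (f t : ℂ))
      (volume.restrict (Ioi 0)) := by
    apply AEStronglyMeasurable.mul
    · refine (continuousOn_of_forall_continuousAt fun t ht => ?_).aestronglyMeasurable
        measurableSet_Ioi
      exact Complex.continuousAt_ofReal_cpow_const _ _ (Or.inr (ne_of_gt ht))
    · have hfm : Measurable f := by
        have hfe : f = fun t => ∑' k : ℕ, (1 - α) * α ^ k * Real.exp (-(β ^ k)⁻¹ * t) :=
          funext hf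
        rw [hfe]
        refine measurable_of_tendsto_metrizable
          (f := fun n t => ∑ k ∈ Finset.range n, (1 - α) * α ^ k * Real.exp (-(β ^ k)⁻¹ * t))
          (fun n => Finset.measurable_sum _ fun k _ => (hcont k).measurable) ?_
        rw [tendsto_pi_nhds]
        intro t
        have hsummt : Summable fun k : ℕ => (1 - α) * α ^ k * Real.exp (-(β ^ k)⁻¹ * t) := by
          refine Summable.of_nonneg_of_le (fun k => htn k t) (fun k => ?_)
            ((summable_geometric_of_lt_one hα.le hα1).mul_left ((1 - α) * Real.exp |t|))
          ·
            have h1 : (β ^ k)⁻¹ ≤ 1 := by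
              rw [inv_le_one_iff₀]
              right
              exact one_le_pow₀ hβ.le
            have h2 : -(β ^ k)⁻¹ * t ≤ |t| := by
              calc -(β ^ k)⁻¹ * t ≤ |(-(β ^ k)⁻¹ * t)| := le_abs_self _
                _ = (β ^ k)⁻¹ * |t| := by
                    rw [abs_mul, abs_neg, abs_of_nonneg (hβk k).le]
                _ ≤ 1 * |t| := by
                    exact mul_le_mul_of_nonneg_right h1 (abs_nonneg t)
                _ = |t| := one_mul _
            have := Real.exp_le_exp.mpr h2
            calc (1 - α) * α ^ k * Real.exp (-(β ^ k)⁻¹ * t)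
                ≤ (1 - α) * α ^ k * Real.exp |t| := by
                  apply mul_le_mul_of_nonneg_left this (by positivity)
              _ = ((1 - α) * Real.exp |t|) * α ^ k := by ring
        exact hsummt.hasSum.tendsto_sum_nat
      exact (Complex.measurable_ofReal.comp hfm).aestronglyMeasurable
  have hint : IntegrableOn (fun t : ℝ => (t : ℂ) ^ (z - 1) * (f t : ℂ)) (Ioi 0) volume := by
    refine ⟨hwmeas, ?_⟩
    show ∫⁻ t in Ioi (0:ℝ), (‖(t : ℂ) ^ (z - 1) * (f t : ℂ)‖₊ : ENNReal) < ⊤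
    calc ∫⁻ t in Ioi (0:ℝ), (‖(t : ℂ) ^ (z - 1) * (f t : ℂ)‖₊ : ENNReal)
        = ∫⁻ t in Ioi (0:ℝ), (‖∑' k, F k t‖₊ : ENNReal) := by
          apply lintegral_congr
          intro t
          rw [hFsum t]
      _ ≤ ∫⁻ t in Ioi (0:ℝ), ∑' k, (‖F k t‖₊ : ENNReal) :=
          lintegral_mono fun t => ennnorm_tsum_le' _
      _ = ∑' k, ∫⁻ t in Ioi (0:ℝ), (‖F k t‖₊ : ENNReal) :=
          lintegral_tsum fun k => (hmeas k).enorm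
      _ < ⊤ := lt_top_iff_ne_top.mpr hlin
  refine ⟨hint, ?_⟩
  -- swap sum and integral
  have hswap : ∫ t in Ioi (0:ℝ), (t : ℂ) ^ (z - 1) * (f t : ℂ)
      = ∑' k, ∫ t in Ioi (0:ℝ), F k t := by
    rw [setIntegral_congr_fun measurableSet_Ioi (fun t _ => hFsum t)]
    exact integral_tsum hmeas hlin
  -- value of each integral
  have hcpow : ∀ k : ℕ, ((β : ℂ) ^ (k : ℕ)) ^ z = ((β : ℂ) ^ z) ^ (k : ℕ) := by
    intro k
    rw [← Complex.cpow_nat_mul' (x := (β : ℂ)) (n := k) ?_ ?_ z, Complex.cpow_nat_mul]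
    · rw [Complex.arg_ofReal_of_nonneg hβ0.le, mul_zero]
      linarith [Real.pi_pos]
    · rw [Complex.arg_ofReal_of_nonneg hβ0.le, mul_zero]
      linarith [Real.pi_pos]
  have hFval : ∀ k : ℕ, ∫ t in Ioi (0:ℝ), F k t
      = (Complex.Gamma z * (1 - (α:ℂ))) * ((α : ℂ) * (β : ℂ) ^ z) ^ k := by
    intro k
    have : ∫ t in Ioi (0:ℝ), F k t
        = (((1 - α) * α ^ k : ℝ) : ℂ) *
          ∫ t in Ioi (0:ℝ), (t : ℂ) ^ (z - 1) * Complex.exp (-((β ^ k)⁻¹ * t)) := by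
      rw [← integral_const_mul]
      refine setIntegral_congr_fun measurableSet_Ioi (fun t ht => ?_)
      rw [hF]
      push_cast
      ring_nf
    rw [this, Complex.integral_cpow_mul_exp_neg_mul_Ioi hz0 (hβk k)]
    have h1 : (1 / ((β ^ k)⁻¹ : ℝ) : ℂ) = (β : ℂ) ^ (k : ℕ) := by
      push_cast
      rw [one_div, inv_inv]
    rw [h1, hcpow k, mul_pow]
    push_cast
    ring
  rw [hswap, tsum_congr hFval, tsum_mul_left, tsum_geometric_of_norm_lt_one ?_,
    mul_div_assoc]
  · rw [div_eq_mul_inv, mul_assoc]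
  · rw [norm_mul, Complex.norm_real, Real.norm_of_nonneg hα.le,
      Complex.norm_cpow_eq_rpow_re_of_pos hβ0]
    exact hq1
end

section
/- There exists a constant c > 0 such that for all t ≥ 1, P[N > t] ≥ c t^{-ρ}, where N is the mixed geometric random variable: conditionally on geometric k (parameter 1-α) and on the event A (which has P_k[A] ≥ (β-1)/β), N is geometric with parameter (β-1)/(β^k - 1). -/
open MeasureTheory

set_option maxHeartbeats 1600000 in
/-- Lower bound for the tail of the mixed geometric number of excursions `N`:
with `K` geometric (parameter `1-α`), `P_k[A] = (β-1)/(β-β^{1-k})` and,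
conditionally on `A` and `K = k ≥ 1`, `P[N > n] = (1-(β-1)/(β^k-1))^n`, there is
`c > 0` with `P[N > n] ≥ c n^{-ρ}` for all `n ≥ 1`, where `ρ = -log α/log β`. -/
theorem tail_lower_bound_N (α β ρ : ℝ) (hα : 0 < α) (hα1 : α < 1)
    (hβ : 1 < β) (hρ : ρ = -Real.log α / Real.log β)
    (Ω : Type*) [MeasurableSpace Ω] (μ : Measure Ω) [IsProbabilityMeasure μ]
    (K : Ω → ℕ) (N : Ω → ℕ) (A : Set Ω)
    (hKm : Measurable K) (hNm : Measurable N) (hAm : MeasurableSet A)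
    (hK : ∀ j : ℕ, μ {ω | K ω = j} = ENNReal.ofReal ((1 - α) * α ^ j))
    (hA : ∀ j : ℕ, 1 ≤ j →
      μ (A ∩ {ω | K ω = j})
        = ENNReal.ofReal ((β - 1) / (β - β ^ (1 - (j : ℤ)))) * μ {ω | K ω = j})
    (hN : ∀ j : ℕ, 1 ≤ j → ∀ n : ℕ,
      μ ({ω | n < N ω} ∩ A ∩ {ω | K ω = j})
        = ENNReal.ofReal ((1 - (β - 1) / (β ^ j - 1)) ^ n) * μ (A ∩ {ω | K ω = j})) :
    ∃ c : ℝ, 0 < c ∧ ∀ n : ℕ, 1 ≤ n →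
      c * Real.rpow (n : ℝ) (-ρ) ≤ (μ {ω | n < N ω}).toReal := by
  have hβ0 : (0:ℝ) < β := by linarith
  have hlogβ : 0 < Real.log β := Real.log_pos hβ
  have hlogα : Real.log α < 0 := Real.log_neg hα hα1
  set C : ℝ := 2*β - 1 with hCdef
  have hC1 : (1:ℝ) < C := by simp only [hCdef]; linarith
  have hC0 : (0:ℝ) < C := by linarith
  have hcpos : 0 < (1/2) * ((β-1)/β) * ((1-α) * α * C ^ (-ρ)) := by
    have h1 : (0:ℝ) < (β-1)/β := div_pos (by linarith) hβ0
    have h2 : (0:ℝ) < C ^ (-ρ) := Real.rpow_pos_of_pos hC0 _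
    have h3 : (0:ℝ) < 1 - α := by linarith
    positivity
  refine ⟨(1/2) * ((β-1)/β) * ((1-α) * α * C ^ (-ρ)), hcpos, ?_⟩
  intro n hn
  have hn1 : (1:ℝ) ≤ (n:ℝ) := by exact_mod_cast hn
  have hn0 : (0:ℝ) < (n:ℝ) := by linarith
  set arg : ℝ := 2*(β-1)*n + 1 with hargdef
  have harg1 : (1:ℝ) < arg := by
    have : (0:ℝ) < 2*(β-1)*n := by nlinarith
    simp only [hargdef]; linarith
  have harg0 : (0:ℝ) < arg := by linarith
  have hargC : arg ≤ C * n := by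
    rw [hargdef, hCdef]; nlinarith [hn1, hβ]
  set k : ℕ := ⌈Real.logb β arg⌉₊ with hkdef
  have hlogbpos : 0 < Real.logb β arg := Real.logb_pos hβ harg1
  have hk1 : 1 ≤ k := Nat.ceil_pos.mpr hlogbpos
  have hβk : arg ≤ β ^ k := by
    calc arg = β ^ Real.logb β arg := (Real.rpow_logb hβ0 (ne_of_gt hβ) harg0).symm
    _ ≤ β ^ ((k:ℝ)) := Real.rpow_le_rpow_of_exponent_le hβ.le (Nat.le_ceil _)
    _ = β ^ k := by rw [Real.rpow_natCast]
  have hβk1 : (1:ℝ) < β ^ k := one_lt_pow₀ hβ (Nat.one_le_iff_ne_zero.mp hk1)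
  set p : ℝ := (β - 1) / (β ^ k - 1) with hpdef
  have hp0 : 0 ≤ p := div_nonneg (by linarith) (by linarith)
  have hp_le : p ≤ 1 / (2*n) := by
    rw [hpdef, div_le_div_iff₀ (by linarith) (by positivity)]
    have : 2*(β-1)*n + 1 ≤ β ^ k := hβk
    nlinarith
  have hp1 : p ≤ 1 := le_trans hp_le (by
    rw [div_le_one (by positivity)]; linarith)
  have hpow : (1:ℝ)/2 ≤ (1 - p) ^ n := by
    have h1 : 1 + (n:ℝ) * (-p) ≤ (1 + (-p)) ^ n := one_add_mul_le_pow (by linarith) n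
    have h2 : (n:ℝ) * p ≤ (n:ℝ) * (1/(2*n)) := mul_le_mul_of_nonneg_left hp_le (by linarith)
    have h3 : (n:ℝ) * (1/(2*n)) = 1/2 := by field_simp
    have h4 : (1:ℝ) + (-p) = 1 - p := by ring
    rw [h4] at h1
    nlinarith
  set q : ℝ := (β - 1) / (β - β ^ (1 - (k:ℤ))) with hqdef
  have hzle : β ^ (1 - (k:ℤ)) ≤ 1 := by
    apply zpow_le_one_of_nonpos₀ hβ.le
    have : (1:ℤ) ≤ (k:ℤ) := by exact_mod_cast hk1
    linarith
  have hzpos : (0:ℝ) < β ^ (1 - (k:ℤ)) := zpow_pos hβ0 _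
  have hq : (β - 1)/β ≤ q := by
    have expand : (β-1)*(β - β ^ (1 - (k:ℤ))) = (β-1)*β - (β-1)*β ^ (1 - (k:ℤ)) := by ring
    have hnn : 0 ≤ (β-1) * β ^ (1 - (k:ℤ)) := mul_nonneg (by linarith) hzpos.le
    rw [hqdef, div_le_div_iff₀ hβ0 (by linarith)]
    linarith
  have hq0 : 0 ≤ q := le_trans (le_of_lt (div_pos (by linarith) hβ0)) hq
  -- bound on α ^ k
  have hk_le : (k:ℝ) ≤ Real.logb β (C * n) + 1 := by
    have h1 : (k:ℝ) < Real.logb β arg + 1 := Nat.ceil_lt_add_one hlogbpos.le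
    have h2 : Real.logb β arg ≤ Real.logb β (C * n) :=
      Real.logb_le_logb_of_le hβ harg0 hargC
    linarith
  have hCn0 : (0:ℝ) < C * n := by positivity
  have hrpow_eq : α ^ Real.logb β (C * n) = (C * n) ^ (-ρ) := by
    rw [Real.rpow_def_of_pos hα, Real.rpow_def_of_pos hCn0]
    congr 1
    rw [Real.logb, hρ]
    field_simp
  have hαk : α * ((C:ℝ) ^ (-ρ) * (n:ℝ) ^ (-ρ)) ≤ α ^ k := by
    have h1 : α ^ ((k:ℝ)) ≥ α ^ (Real.logb β (C * n) + 1) :=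
      Real.rpow_le_rpow_of_exponent_ge hα hα1.le hk_le
    have h2 : α ^ (Real.logb β (C * n) + 1)
        = α ^ Real.logb β (C * n) * α := by
      rw [Real.rpow_add hα, Real.rpow_one]
    have h3 : (C * n : ℝ) ^ (-ρ) = (C:ℝ) ^ (-ρ) * (n:ℝ) ^ (-ρ) :=
      Real.mul_rpow hC0.le hn0.le
    have h4 : α ^ ((k:ℝ)) = α ^ k := Real.rpow_natCast α k
    rw [h2, hrpow_eq, h3] at h1
    rw [h4] at h1
    linarith [h1]
  -- measure computation
  have hsub : ({ω | n < N ω} ∩ A ∩ {ω | K ω = k}) ⊆ {ω | n < N ω} :=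
    (Set.inter_subset_left).trans Set.inter_subset_left
  have hmono : μ ({ω | n < N ω} ∩ A ∩ {ω | K ω = k}) ≤ μ {ω | n < N ω} :=
    measure_mono hsub
  have hval : μ ({ω | n < N ω} ∩ A ∩ {ω | K ω = k})
      = ENNReal.ofReal ((1 - p) ^ n) * (ENNReal.ofReal q
          * ENNReal.ofReal ((1 - α) * α ^ k)) := by
    rw [hN k hk1 n, hA k hk1, hK k]
  have hNEnonneg : 0 ≤ (1 - p) ^ n := pow_nonneg (by linarith) n
  have hgeomnonneg : 0 ≤ (1 - α) * α ^ k :=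
    mul_nonneg (by linarith) (pow_nonneg hα.le k)
  have htoReal : ((1 - p) ^ n) * (q * ((1 - α) * α ^ k))
      = (μ ({ω | n < N ω} ∩ A ∩ {ω | K ω = k})).toReal := by
    rw [hval, ENNReal.toReal_mul, ENNReal.toReal_mul,
      ENNReal.toReal_ofReal hNEnonneg, ENNReal.toReal_ofReal hq0,
      ENNReal.toReal_ofReal hgeomnonneg]
  have hfin : μ {ω | n < N ω} ≠ ⊤ := measure_ne_top μ _
  have hle : (μ ({ω | n < N ω} ∩ A ∩ {ω | K ω = k})).toReal
      ≤ (μ {ω | n < N ω}).toReal := ENNReal.toReal_mono hfin hmono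
  refine le_trans ?_ (le_trans (le_of_eq htoReal) hle)
  calc (1/2) * ((β-1)/β) * ((1-α) * α * C ^ (-ρ)) * Real.rpow (n:ℝ) (-ρ)
      = (1/2) * ((β-1)/β * ((1-α) * (α * (C ^ (-ρ) * (n:ℝ) ^ (-ρ))))) := by
        rw [show Real.rpow ((n:ℕ):ℝ) (-ρ) = ((n:ℕ):ℝ) ^ (-ρ) from rfl]; ring
    _ ≤ (1 - p) ^ n * (q * ((1 - α) * α ^ k)) := by
        have hrn : (0:ℝ) ≤ C ^ (-ρ) * (n:ℝ) ^ (-ρ) :=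
          mul_nonneg (Real.rpow_nonneg hC0.le _) (Real.rpow_nonneg hn0.le _)
        have hinner : (0:ℝ) ≤ (1-α) * (α * (C ^ (-ρ) * (n:ℝ) ^ (-ρ))) :=
          mul_nonneg (by linarith) (mul_nonneg hα.le hrn)
        apply mul_le_mul hpow
        · apply mul_le_mul hq
          · exact mul_le_mul_of_nonneg_left hαk (by linarith)
          · exact mul_nonneg (by linarith) (mul_nonneg hα.le hrn)
          · exact hq0
        · exact mul_nonneg (div_nonneg (by linarith) hβ0.le) hinner
        · exact hNEnonneg
end

section
/- Let X be the conductance-β^l walk on {0,...,k} started at 0 (β > 1, k ≥ 1), T_in the hitting time of k, and let the environment size k be geometric with parameter 1-α (0 < α < 1). Then there exists ε > 0 such that P[T_in > t] ≤ e^{-εt} + α^{t(β-1)/(2(β+1))} for all t ≥ 1; in particular P[T_in > t] decays exponentially in t. -/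
open MeasureTheory

noncomputable def HT.pw (β : ℝ) (j : ℕ) (l m : ℤ) : ℝ :=
  if l = 0 then (if m = 1 then 1 else 0)
  else if l = (j : ℤ) then (if m = (j : ℤ) - 1 then 1 else 0)
  else if m = l + 1 then β / (1 + β)
  else if m = l - 1 then 1 / (1 + β) else 0

namespace HT

lemma pw_nonneg {β : ℝ} (hβ : 0 < β) (j : ℕ) (l m : ℤ) : 0 ≤ pw β j l m := by
  unfold pw; split_ifs <;> positivity

noncomputable def pathW (β θ : ℝ) (j n : ℕ) (y : Fin (n+1) → ℤ) : ℝ :=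
  (if y 0 = 0 then (1:ℝ) else 0) * (if (∀ i, y i ≠ (j:ℤ)) then (1:ℝ) else 0) *
  (∏ i : Fin n, pw β j (y i.castSucc) (y i.succ)) * Real.exp (-θ * (y (Fin.last n)))

lemma pathW_nonneg {β : ℝ} (hβ : 0 < β) (θ : ℝ) (j n : ℕ) (y : Fin (n+1) → ℤ) :
    0 ≤ pathW β θ j n y := by
  unfold pathW
  have := Finset.prod_nonneg
    (fun i (_ : i ∈ Finset.univ) => pw_nonneg hβ j (y (Fin.castSucc i)) (y i.succ))
  have he := (Real.exp_pos (-θ * (y (Fin.last n)))).le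
  split_ifs <;> nlinarith

noncomputable def A (β θ : ℝ) (j n : ℕ) : ℝ :=
  ∑ y ∈ Fintype.piFinset (fun _ : Fin (n+1) => Finset.Icc (0:ℤ) (j:ℤ)), pathW β θ j n y

lemma A_zero_le_one (β θ : ℝ) (j : ℕ) : A β θ j 0 ≤ 1 := by
  unfold A
  calc ∑ y ∈ Fintype.piFinset (fun _ : Fin 1 => Finset.Icc (0:ℤ) (j:ℤ)), pathW β θ j 0 y
      ≤ ∑ y ∈ Fintype.piFinset (fun _ : Fin 1 => Finset.Icc (0:ℤ) (j:ℤ)),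
          (if y = (fun _ => 0) then (1:ℝ) else 0) := by
        apply Finset.sum_le_sum
        intro y _
        by_cases h0 : y 0 = 0
        · have hy : y = (fun _ => (0:ℤ)) := by
            funext i
            have : i = 0 := Subsingleton.elim i 0
            rw [this]; exact h0
          rw [if_pos hy]
          unfold pathW
          have : y (Fin.last 0) = 0 := by rw [show Fin.last 0 = 0 from rfl]; exact h0
          rw [this]
          simp only [Finset.univ_eq_empty, Finset.prod_empty]
          push_cast
          rw [mul_zero, Real.exp_zero]
          split_ifs <;> norm_num
        · have h1 : pathW β θ j 0 y = 0 := by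
            unfold pathW; rw [if_neg h0]; ring
          rw [h1]
          split_ifs <;> norm_num
    _ ≤ 1 := by
        rw [Finset.sum_ite_eq' _ (fun _ => (0:ℤ)) (fun _ => (1:ℝ))]
        split_ifs <;> norm_num

lemma inner_sum_le {β θ : ℝ} (hβ : 1 < β) (hθ : 0 ≤ θ) (j : ℕ) {l : ℤ}
    (hl0 : 0 ≤ l) (hlj : l ≤ (j:ℤ)) (hne : l ≠ (j:ℤ)) :
    ∑ m ∈ Finset.Icc (0:ℤ) (j:ℤ),
        (if m = (j:ℤ) then 0 else pw β j l m * Real.exp (-θ * m))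
      ≤ (β * Real.exp (-θ) + Real.exp θ) / (1 + β) * Real.exp (-θ * l) := by
  have hb0 : (0:ℝ) < 1 + β := by linarith
  have hexple : Real.exp (-θ) ≤ Real.exp θ := Real.exp_le_exp.mpr (by linarith)
  by_cases hl : l = 0
  · subst hl
    calc ∑ m ∈ Finset.Icc (0:ℤ) (j:ℤ),
          (if m = (j:ℤ) then 0 else pw β j 0 m * Real.exp (-θ * m))
        ≤ ∑ m ∈ Finset.Icc (0:ℤ) (j:ℤ), (if m = 1 then Real.exp (-θ * m) else 0) := by
          apply Finset.sum_le_sum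
          intro m _
          by_cases hmj : m = (j:ℤ)
          · rw [if_pos hmj]
            split_ifs <;> positivity
          · rw [if_neg hmj]
            unfold pw
            rw [if_pos rfl]
            by_cases hm1 : m = 1
            · rw [if_pos hm1, if_pos hm1, one_mul]
            · rw [if_neg hm1, if_neg hm1, zero_mul]
      _ ≤ Real.exp (-θ) := by
          rw [Finset.sum_ite_eq' _ (1:ℤ) (fun m => Real.exp (-θ * m))]
          split_ifs
          · push_cast; rw [mul_one]
          · positivity
      _ ≤ (β * Real.exp (-θ) + Real.exp θ) / (1 + β) * Real.exp (-θ * (0:ℤ)) := by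
          push_cast
          rw [mul_zero, Real.exp_zero, mul_one, le_div_iff₀ hb0]
          nlinarith
  · have key : ∀ m ∈ Finset.Icc (0:ℤ) (j:ℤ),
        (if m = (j:ℤ) then 0 else pw β j l m * Real.exp (-θ * m))
          ≤ (if m = l + 1 then β / (1 + β) * Real.exp (-θ * m) else 0)
            + (if m = l - 1 then 1 / (1 + β) * Real.exp (-θ * m) else 0) := by
      intro m _
      have h1 : (0:ℝ) ≤ (if m = l + 1 then β / (1 + β) * Real.exp (-θ * m) else 0) := by
        split_ifs <;> positivity
      have h2 : (0:ℝ) ≤ (if m = l - 1 then 1 / (1 + β) * Real.exp (-θ * m) else 0) := by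
        split_ifs <;> positivity
      by_cases hmj : m = (j:ℤ)
      · rw [if_pos hmj]; linarith
      · rw [if_neg hmj]
        unfold pw
        rw [if_neg hl, if_neg hne]
        by_cases hm1 : m = l + 1
        · rw [if_pos hm1, if_pos hm1]
          have : ¬ (m = l - 1) := by omega
          rw [if_neg this]; linarith
        · rw [if_neg hm1, if_neg hm1]
          by_cases hm2 : m = l - 1
          · rw [if_pos hm2, if_pos hm2]; linarith
          · rw [if_neg hm2, if_neg hm2, zero_mul]; linarith
    calc ∑ m ∈ Finset.Icc (0:ℤ) (j:ℤ),
          (if m = (j:ℤ) then 0 else pw β j l m * Real.exp (-θ * m))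
        ≤ ∑ m ∈ Finset.Icc (0:ℤ) (j:ℤ),
            ((if m = l + 1 then β / (1 + β) * Real.exp (-θ * m) else 0)
              + (if m = l - 1 then 1 / (1 + β) * Real.exp (-θ * m) else 0)) :=
          Finset.sum_le_sum key
      _ ≤ β / (1 + β) * Real.exp (-θ * (l+1)) + 1 / (1 + β) * Real.exp (-θ * (l-1)) := by
          rw [Finset.sum_add_distrib,
            Finset.sum_ite_eq' _ (l+1) (fun m => β / (1 + β) * Real.exp (-θ * m)),
            Finset.sum_ite_eq' _ (l-1) (fun m => 1 / (1 + β) * Real.exp (-θ * m))]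
          push_cast
          apply add_le_add
          · split_ifs
            · exact le_rfl
            · positivity
          · split_ifs
            · exact le_rfl
            · positivity
      _ = (β * Real.exp (-θ) + Real.exp θ) / (1 + β) * Real.exp (-θ * l) := by
          have e1 : Real.exp (-θ * ((l:ℝ)+1)) = Real.exp (-θ) * Real.exp (-θ * l) := by
            rw [← Real.exp_add]; ring_nf
          have e2 : Real.exp (-θ * ((l:ℝ)-1)) = Real.exp θ * Real.exp (-θ * l) := by
            rw [← Real.exp_add]; ring_nf
          push_cast
          rw [e1, e2]
          field_simp

lemma sum_piFinset_snoc {M : Type*} [AddCommMonoid M] (S : Finset ℤ) (n : ℕ)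
    (F : (Fin (n+2) → ℤ) → M) :
    ∑ y ∈ Fintype.piFinset (fun _ : Fin (n+2) => S), F y
      = ∑ z ∈ Fintype.piFinset (fun _ : Fin (n+1) => S), ∑ m ∈ S, F (Fin.snoc z m) := by
  have h2 : ∑ q ∈ (Fintype.piFinset (fun _ : Fin (n+1) => S)) ×ˢ S, F (Fin.snoc q.1 q.2)
      = ∑ z ∈ Fintype.piFinset (fun _ : Fin (n+1) => S), ∑ m ∈ S, F (Fin.snoc z m) :=
    Finset.sum_product _ _ _
  rw [← h2]
  apply Finset.sum_nbij' (fun y => (Fin.init y, y (Fin.last (n+1))))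
    (fun zm => Fin.snoc zm.1 zm.2)
  · intro y hy
    rw [Fintype.mem_piFinset] at hy
    rw [Finset.mem_product]
    constructor
    · rw [Fintype.mem_piFinset]
      intro i
      exact hy i.castSucc
    · exact hy _
  · rintro ⟨z, m⟩ hzm
    rw [Finset.mem_product] at hzm
    rw [Fintype.mem_piFinset]
    intro i
    refine Fin.lastCases ?_ ?_ i
    · rw [Fin.snoc_last]
      exact hzm.2
    · intro i'
      rw [Fin.snoc_castSucc]
      exact (Fintype.mem_piFinset.mp hzm.1) i'
  · intro y _
    exact Fin.snoc_init_self y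
  · rintro ⟨z, m⟩ _
    simp [Fin.init_snoc, Fin.snoc_last]
  · intro y _
    rw [Fin.snoc_init_self y]

lemma forall_snoc_ne {n : ℕ} (z : Fin (n+1) → ℤ) (m c : ℤ) :
    (∀ i : Fin (n+2), (Fin.snoc z m : Fin (n+2) → ℤ) i ≠ c) ↔ ((∀ i, z i ≠ c) ∧ m ≠ c) := by
  constructor
  · intro h
    refine ⟨fun i => ?_, ?_⟩
    · have := h i.castSucc
      rwa [Fin.snoc_castSucc] at this
    · have := h (Fin.last (n+1))
      rwa [Fin.snoc_last] at this
  · rintro ⟨h1, h2⟩ i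
    refine Fin.lastCases ?_ ?_ i
    · rw [Fin.snoc_last]; exact h2
    · intro i'; rw [Fin.snoc_castSucc]; exact h1 i'

lemma pathW_snoc (β θ : ℝ) (j n : ℕ) (z : Fin (n+1) → ℤ) (m : ℤ) :
    pathW β θ j (n+1) (Fin.snoc z m) =
      (pathW β θ j n z * Real.exp (θ * (z (Fin.last n)))) *
        (if m = (j:ℤ) then 0 else pw β j (z (Fin.last n)) m * Real.exp (-θ * m)) := by
  unfold pathW
  have h0 : (Fin.snoc z m : Fin (n+2) → ℤ) 0 = z 0 := by
    rw [show ((0 : Fin (n+2))) = Fin.castSucc 0 by simp, Fin.snoc_castSucc]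
  have hprod : (∏ i : Fin (n+1), pw β j ((Fin.snoc z m : Fin (n+2) → ℤ) i.castSucc)
        ((Fin.snoc z m : Fin (n+2) → ℤ) i.succ))
      = (∏ i : Fin n, pw β j (z i.castSucc) (z i.succ)) * pw β j (z (Fin.last n)) m := by
    rw [Fin.prod_univ_castSucc]
    congr 1
    · apply Finset.prod_congr rfl
      intro i _
      rw [Fin.snoc_castSucc, Fin.succ_castSucc, Fin.snoc_castSucc]
    · rw [Fin.snoc_castSucc, Fin.succ_last, Fin.snoc_last]
  have hlast : (Fin.snoc z m : Fin (n+2) → ℤ) (Fin.last (n+1)) = m := Fin.snoc_last _ _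
  rw [h0, hprod, hlast]
  have hexp : Real.exp (-θ * (z (Fin.last n))) * Real.exp (θ * (z (Fin.last n))) = 1 := by
    rw [← Real.exp_add]; ring_nf; exact Real.exp_zero
  by_cases hz : ∀ i, z i ≠ (j:ℤ)
  · by_cases hm : m = (j:ℤ)
    · have : ¬ (∀ i : Fin (n+2), (Fin.snoc z m : Fin (n+2) → ℤ) i ≠ (j:ℤ)) := by
        rw [forall_snoc_ne]; tauto
      rw [if_neg this, if_pos hz, if_pos hm]
      ring
    · have : (∀ i : Fin (n+2), (Fin.snoc z m : Fin (n+2) → ℤ) i ≠ (j:ℤ)) := by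
        rw [forall_snoc_ne]; tauto
      rw [if_pos this, if_pos hz, if_neg hm]
      linear_combination (-(if z 0 = 0 then (1:ℝ) else 0) *
        (∏ i : Fin n, pw β j (z i.castSucc) (z i.succ)) *
        pw β j (z (Fin.last n)) m * Real.exp (-θ * (m:ℝ))) * hexp
  · have : ¬ (∀ i : Fin (n+2), (Fin.snoc z m : Fin (n+2) → ℤ) i ≠ (j:ℤ)) := by
      rw [forall_snoc_ne]; tauto
    rw [if_neg this, if_neg hz]
    ring

lemma A_succ_le {β θ : ℝ} (hβ : 1 < β) (hθ : 0 ≤ θ) (j n : ℕ) :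
    A β θ j (n+1) ≤ (β * Real.exp (-θ) + Real.exp θ) / (1 + β) * A β θ j n := by
  unfold A
  rw [sum_piFinset_snoc, Finset.mul_sum]
  apply Finset.sum_le_sum
  intro z hz
  rw [Finset.sum_congr rfl (fun m _ => pathW_snoc β θ j n z m), ← Finset.mul_sum]
  by_cases hall : ∀ i, z i ≠ (j:ℤ)
  · have hlmem := Fintype.mem_piFinset.mp hz (Fin.last n)
    obtain ⟨hl0, hlj⟩ := Finset.mem_Icc.mp hlmem
    have hkey := inner_sum_le hβ hθ j hl0 hlj (hall _)
    have hWp : 0 ≤ pathW β θ j n z * Real.exp (θ * (z (Fin.last n))) :=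
      mul_nonneg (pathW_nonneg (by linarith) θ j n z) (Real.exp_pos _).le
    calc (pathW β θ j n z * Real.exp (θ * (z (Fin.last n)))) *
          (∑ m ∈ Finset.Icc (0:ℤ) (j:ℤ),
            (if m = (j:ℤ) then 0 else pw β j (z (Fin.last n)) m * Real.exp (-θ * m)))
        ≤ (pathW β θ j n z * Real.exp (θ * (z (Fin.last n)))) *
            ((β * Real.exp (-θ) + Real.exp θ) / (1 + β) * Real.exp (-θ * (z (Fin.last n)))) :=
          mul_le_mul_of_nonneg_left hkey hWp
      _ = (β * Real.exp (-θ) + Real.exp θ) / (1 + β) * pathW β θ j n z := by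
          have hexp : Real.exp (θ * ((z (Fin.last n)):ℝ)) *
              Real.exp (-θ * ((z (Fin.last n)):ℝ)) = 1 := by
            rw [← Real.exp_add]; ring_nf; exact Real.exp_zero
          linear_combination ((β * Real.exp (-θ) + Real.exp θ) / (1 + β) *
            pathW β θ j n z) * hexp
  · have hWz : pathW β θ j n z = 0 := by
      unfold pathW; rw [if_neg hall]; ring
    rw [hWz]
    simp

lemma A_le_pow {β θ : ℝ} (hβ : 1 < β) (hθ : 0 ≤ θ) (j n : ℕ) :
    A β θ j n ≤ ((β * Real.exp (-θ) + Real.exp θ) / (1 + β)) ^ n := by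
  have hlam : 0 ≤ (β * Real.exp (-θ) + Real.exp θ) / (1 + β) := by positivity
  induction n with
  | zero => simpa using A_zero_le_one β θ j
  | succ n ih =>
      calc A β θ j (n+1) ≤ (β * Real.exp (-θ) + Real.exp θ) / (1 + β) * A β θ j n :=
            A_succ_le hβ hθ j n
        _ ≤ (β * Real.exp (-θ) + Real.exp θ) / (1 + β) *
              ((β * Real.exp (-θ) + Real.exp θ) / (1 + β)) ^ n :=
            mul_le_mul_of_nonneg_left ih hlam
        _ = ((β * Real.exp (-θ) + Real.exp θ) / (1 + β)) ^ (n+1) := (pow_succ' _ _).symm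

lemma path_range {β : ℝ} {j t : ℕ} {y : Fin (t+1) → ℤ}
    (h0 : y 0 = 0) (hne : ∀ i, y i ≠ (j:ℤ))
    (hprod : (∏ i : Fin t, pw β j (y i.castSucc) (y i.succ)) ≠ 0) :
    ∀ i, y i ∈ Finset.Icc (0:ℤ) (j:ℤ) := by
  have hj : (1:ℤ) ≤ (j:ℤ) := by
    have : j ≠ 0 := by
      intro h
      apply hne 0
      rw [h0, h]
      simp
    omega
  have key : ∀ k : ℕ, ∀ hk : k < t+1, 0 ≤ y ⟨k, hk⟩ ∧ y ⟨k, hk⟩ ≤ (j:ℤ) := by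
    intro k
    induction k with
    | zero =>
        intro hk
        have h00 : y ⟨0, hk⟩ = 0 := by
          rw [show (⟨0, hk⟩ : Fin (t+1)) = 0 from rfl]
          exact h0
        rw [h00]
        omega
    | succ k ih =>
        intro hk
        have hkt : k < t := by omega
        have hk' : k < t + 1 := by omega
        have hfac : pw β j (y ((⟨k, hkt⟩ : Fin t).castSucc)) (y ((⟨k, hkt⟩ : Fin t).succ)) ≠ 0 := by
          intro h
          exact hprod (Finset.prod_eq_zero (Finset.mem_univ (⟨k, hkt⟩ : Fin t)) h)
        have e1 : y ((⟨k, hkt⟩ : Fin t).castSucc) = y ⟨k, hk'⟩ := rfl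
        have e2 : y ((⟨k, hkt⟩ : Fin t).succ) = y ⟨k+1, hk⟩ := rfl
        rw [e1, e2] at hfac
        obtain ⟨il, iu⟩ := ih hk'
        have hnel : y ⟨k, hk'⟩ ≠ (j:ℤ) := hne _
        unfold pw at hfac
        by_cases hl0 : y ⟨k, hk'⟩ = 0
        · rw [if_pos hl0] at hfac
          have : y ⟨k+1, hk⟩ = 1 := by
            by_contra hcon
            rw [if_neg hcon] at hfac
            exact hfac rfl
          omega
        · rw [if_neg hl0, if_neg hnel] at hfac
          by_cases hm1 : y ⟨k+1, hk⟩ = y ⟨k, hk'⟩ + 1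
          · omega
          · rw [if_neg hm1] at hfac
            by_cases hm2 : y ⟨k+1, hk⟩ = y ⟨k, hk'⟩ - 1
            · omega
            · rw [if_neg hm2] at hfac
              exact absurd rfl hfac
  intro i
  rw [Finset.mem_Icc]
  have := key i.1 i.2
  have he : y ⟨i.1, i.2⟩ = y i := by congr
  rw [he] at this
  exact this


noncomputable def pathP (β : ℝ) (j n : ℕ) (y : Fin (n+1) → ℤ) : ℝ :=
  (if y 0 = 0 then (1:ℝ) else 0) * (if (∀ i, y i ≠ (j:ℤ)) then (1:ℝ) else 0) *
  (∏ i : Fin n, pw β j (y i.castSucc) (y i.succ))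

lemma pathP_nonneg {β : ℝ} (hβ : 0 < β) (j n : ℕ) (y : Fin (n+1) → ℤ) :
    0 ≤ pathP β j n y := by
  unfold pathP
  have := Finset.prod_nonneg
    (fun i (_ : i ∈ Finset.univ) => pw_nonneg hβ j (y (Fin.castSucc i)) (y i.succ))
  split_ifs <;> nlinarith

lemma pathP_eq (β θ : ℝ) (j n : ℕ) (y : Fin (n+1) → ℤ) :
    pathP β j n y = pathW β θ j n y * Real.exp (θ * (y (Fin.last n))) := by
  unfold pathP pathW
  have hexp : Real.exp (-θ * ((y (Fin.last n)):ℝ)) * Real.exp (θ * ((y (Fin.last n)):ℝ)) = 1 := by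
    rw [← Real.exp_add]; ring_nf; exact Real.exp_zero
  linear_combination ((if y 0 = 0 then (1:ℝ) else 0) * (if (∀ i, y i ≠ (j:ℤ)) then (1:ℝ) else 0) *
    (∏ i : Fin n, pw β j (y i.castSucc) (y i.succ))) * hexp.symm

def ext (t : ℕ) (y : Fin (t+1) → ℤ) : ℕ → ℤ := fun i => if h : i < t+1 then y ⟨i, h⟩ else 0

lemma core {β θ : ℝ} (hβ : 1 < β) (hθ : 0 ≤ θ)
    (μ : ℕ → Measure (ℕ → ℤ))
    (p : ℕ → ℤ → ℤ → ℝ)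
    (hp : ∀ (j : ℕ) (l m : ℤ), p j l m = pw β j l m)
    (hcyl : ∀ (j n : ℕ) (x : ℕ → ℤ),
      μ j {ω | ∀ i ≤ n, ω i = x i} =
        (if x 0 = 0 then 1 else 0) *
          ENNReal.ofReal (∏ i ∈ Finset.range n, p j (x i) (x (i + 1))))
    (j t : ℕ) :
    μ j {ω | t < sInf {s : ℕ | ω s = (j:ℤ)}}
      ≤ ENNReal.ofReal (Real.exp (θ * j) *
          ((β * Real.exp (-θ) + Real.exp θ) / (1 + β)) ^ t) := by
  classical
  have hcover : {ω : ℕ → ℤ | t < sInf {s : ℕ | ω s = (j:ℤ)}}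
      ⊆ ⋃ (y : {y : Fin (t+1) → ℤ | ∀ i, y i ≠ (j:ℤ)}),
          {ω : ℕ → ℤ | ∀ i ≤ t, ω i = ext t y.1 i} := by
    intro ω hω
    have hω' : t < sInf {s : ℕ | ω s = (j:ℤ)} := hω
    have hne : ∀ s, s ≤ t → ω s ≠ (j:ℤ) := by
      intro s hs hcon
      have h1 : sInf {s : ℕ | ω s = (j:ℤ)} ≤ s := Nat.sInf_le hcon
      omega
    refine Set.mem_iUnion.mpr ⟨⟨fun i => ω i, fun i => hne i (Nat.lt_succ_iff.mp i.2)⟩, ?_⟩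
    intro i hi
    show ω i = ext t (fun i' : Fin (t+1) => ω i') i
    unfold ext
    rw [dif_pos (by omega : i < t+1)]
  calc μ j {ω | t < sInf {s : ℕ | ω s = (j:ℤ)}}
      ≤ μ j (⋃ (y : {y : Fin (t+1) → ℤ | ∀ i, y i ≠ (j:ℤ)}),
          {ω : ℕ → ℤ | ∀ i ≤ t, ω i = ext t y.1 i}) := measure_mono hcover
    _ ≤ ∑' (y : {y : Fin (t+1) → ℤ | ∀ i, y i ≠ (j:ℤ)}),
          μ j {ω : ℕ → ℤ | ∀ i ≤ t, ω i = ext t y.1 i} := measure_iUnion_le _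
    _ ≤ ∑' (y : {y : Fin (t+1) → ℤ | ∀ i, y i ≠ (j:ℤ)}), ENNReal.ofReal (pathP β j t y.1) := by
        apply ENNReal.tsum_le_tsum
        intro y
        rw [hcyl j t (ext t y.1)]
        have hx0 : ext t y.1 0 = y.1 0 := by
          unfold ext; rw [dif_pos (by omega : 0 < t+1)]; rfl
        have hprodeq : (∏ i ∈ Finset.range t, p j (ext t y.1 i) (ext t y.1 (i+1)))
            = ∏ i : Fin t, pw β j (y.1 i.castSucc) (y.1 i.succ) := by
          rw [← Fin.prod_univ_eq_prod_range (fun i => p j (ext t y.1 i) (ext t y.1 (i+1))) t]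
          apply Finset.prod_congr rfl
          intro i _
          have a1 : ext t y.1 (i:ℕ) = y.1 i.castSucc := by
            unfold ext; rw [dif_pos (by omega : (i:ℕ) < t+1)]; rfl
          have a2 : ext t y.1 ((i:ℕ)+1) = y.1 i.succ := by
            unfold ext; rw [dif_pos (by omega : (i:ℕ)+1 < t+1)]; rfl
          rw [a1, a2, hp]
        rw [hx0, hprodeq]
        unfold pathP
        rw [if_pos (show ∀ i, (y.1 : Fin (t+1) → ℤ) i ≠ (j:ℤ) from y.2)]
        by_cases h0 : y.1 0 = 0
        · rw [if_pos h0, if_pos h0, one_mul, mul_one, one_mul]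
        · rw [if_neg h0, if_neg h0, zero_mul, zero_mul, zero_mul, ENNReal.ofReal_zero]
    _ = ∑' (y : Fin (t+1) → ℤ),
          Set.indicator {y : Fin (t+1) → ℤ | ∀ i, y i ≠ (j:ℤ)}
            (fun y => ENNReal.ofReal (pathP β j t y)) y := by
        exact tsum_subtype {y : Fin (t+1) → ℤ | ∀ i, y i ≠ (j:ℤ)}
          (fun y => ENNReal.ofReal (pathP β j t y))
    _ ≤ ∑' (y : Fin (t+1) → ℤ), ENNReal.ofReal (pathP β j t y) :=
        ENNReal.tsum_le_tsum (fun y => Set.indicator_le_self _ _ y)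
    _ = ∑ y ∈ Fintype.piFinset (fun _ : Fin (t+1) => Finset.Icc (0:ℤ) (j:ℤ)),
          ENNReal.ofReal (pathP β j t y) := by
        apply tsum_eq_sum
        intro y hy
        have hz : pathP β j t y = 0 := by
          by_contra hcon
          unfold pathP at hcon
          have h0 : y 0 = 0 := by
            by_contra h
            rw [if_neg h] at hcon
            simp at hcon
          have hall : ∀ i, y i ≠ (j:ℤ) := by
            by_contra h
            rw [if_neg h] at hcon
            simp at hcon
          have hprodne : (∏ i : Fin t, pw β j (y i.castSucc) (y i.succ)) ≠ 0 := by
            intro h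
            rw [h] at hcon
            simp at hcon
          exact hy (Fintype.mem_piFinset.mpr (path_range h0 hall hprodne))
        rw [hz, ENNReal.ofReal_zero]
    _ = ENNReal.ofReal (∑ y ∈ Fintype.piFinset (fun _ : Fin (t+1) => Finset.Icc (0:ℤ) (j:ℤ)),
          pathP β j t y) :=
        (ENNReal.ofReal_sum_of_nonneg (fun y _ => pathP_nonneg (by linarith) j t y)).symm
    _ ≤ ENNReal.ofReal (Real.exp (θ * j) *
          ((β * Real.exp (-θ) + Real.exp θ) / (1 + β)) ^ t) := by
        apply ENNReal.ofReal_le_ofReal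
        calc ∑ y ∈ Fintype.piFinset (fun _ : Fin (t+1) => Finset.Icc (0:ℤ) (j:ℤ)), pathP β j t y
            ≤ ∑ y ∈ Fintype.piFinset (fun _ : Fin (t+1) => Finset.Icc (0:ℤ) (j:ℤ)),
                Real.exp (θ * j) * pathW β θ j t y := by
              apply Finset.sum_le_sum
              intro y hy
              rw [pathP_eq β θ j t y]
              have hyl : (y (Fin.last t)) ≤ (j:ℤ) :=
                (Finset.mem_Icc.mp (Fintype.mem_piFinset.mp hy (Fin.last t))).2
              have hexple : Real.exp (θ * ((y (Fin.last t)):ℝ)) ≤ Real.exp (θ * j) := by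
                apply Real.exp_le_exp.mpr
                apply mul_le_mul_of_nonneg_left _ hθ
                exact_mod_cast hyl
              calc pathW β θ j t y * Real.exp (θ * ((y (Fin.last t)):ℝ))
                  ≤ pathW β θ j t y * Real.exp (θ * j) :=
                    mul_le_mul_of_nonneg_left hexple (pathW_nonneg (by linarith) θ j t y)
                _ = Real.exp (θ * j) * pathW β θ j t y := mul_comm _ _
          _ = Real.exp (θ * j) * A β θ j t := by rw [← Finset.mul_sum]; rfl
          _ ≤ Real.exp (θ * j) * ((β * Real.exp (-θ) + Real.exp θ) / (1 + β)) ^ t :=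
              mul_le_mul_of_nonneg_left (A_le_pow hβ hθ j t) (Real.exp_pos _).le


end HT

/-- Exponential tail of the time `T_in` to reach the right end of a trap of
geometric random size: with `μ j` the law of the conductance-`β^l` walk on
`{0,…,j}` started at `0`, and the trap size geometric with parameter `1-α`,
there is `ε > 0` such that
`P[T_in > t] ≤ e^{-εt} + α^{t(β-1)/(2(β+1))}` for all `t ≥ 1`. -/
theorem hitting_time_exponential_tail (α β : ℝ) (hα : 0 < α) (hα1 : α < 1)
    (hβ : 1 < β)
    (μ : ℕ → Measure (ℕ → ℤ)) (hprob : ∀ j, IsProbabilityMeasure (μ j))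
    (p : ℕ → ℤ → ℤ → ℝ)
    (hp : ∀ (j : ℕ) (l m : ℤ), p j l m =
      if l = 0 then (if m = 1 then 1 else 0)
      else if l = (j : ℤ) then (if m = (j : ℤ) - 1 then 1 else 0)
      else if m = l + 1 then β / (1 + β)
      else if m = l - 1 then 1 / (1 + β) else 0)
    (hcyl : ∀ (j n : ℕ) (x : ℕ → ℤ),
      μ j {ω | ∀ i ≤ n, ω i = x i} =
        (if x 0 = 0 then 1 else 0) *
          ENNReal.ofReal (∏ i ∈ Finset.range n, p j (x i) (x (i + 1)))) :
    ∃ ε : ℝ, 0 < ε ∧ ∀ t : ℕ, 1 ≤ t →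
      (∑' j : ℕ, ENNReal.ofReal ((1 - α) * α ^ j) *
          μ j {ω | t < sInf {s : ℕ | ω s = (j : ℤ)}}).toReal
        ≤ Real.exp (-ε * t) +
          Real.rpow α ((t : ℝ) * (β - 1) / (2 * (β + 1))) := by
  classical
  have hβ0 : (0:ℝ) < β := by linarith
  have hβ1 : (0:ℝ) < β + 1 := by linarith
  set m : ℝ := (β - 1) / (β + 1) with hmdef
  have hm0 : 0 < m := div_pos (by linarith) hβ1
  have hm1 : m < 1 := by rw [hmdef, div_lt_one hβ1]; linarith
  set θ : ℝ := m / 4 with hθdef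
  have hθ0 : 0 < θ := by rw [hθdef]; positivity
  have hθ1 : θ < 1 := by rw [hθdef]; linarith
  set c : ℝ := m / 2 with hcdef
  have hc0 : 0 < c := by rw [hcdef]; positivity
  set lam : ℝ := (β * Real.exp (-θ) + Real.exp θ) / (1 + β) with hlamdef
  have hlam0 : 0 < lam := by rw [hlamdef]; positivity
  have he1 : Real.exp (-θ) ≤ 1/(1+θ) := by
    have h := Real.add_one_le_exp θ
    have h1 : (0:ℝ) < 1 + θ := by linarith
    rw [Real.exp_neg, one_div]
    exact inv_anti₀ h1 (by linarith)
  have he2 : Real.exp θ ≤ 1/(1-θ) := by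
    have h := Real.add_one_le_exp (-θ)
    have hpos : (0:ℝ) < 1 - θ := by linarith
    rw [Real.exp_neg] at h
    rw [le_div_iff₀ hpos]
    have hep := Real.exp_pos θ
    calc Real.exp θ * (1-θ) ≤ Real.exp θ * (Real.exp θ)⁻¹ :=
          mul_le_mul_of_nonneg_left (by linarith) hep.le
      _ = 1 := mul_inv_cancel₀ (ne_of_gt hep)
  have hlamle : lam ≤ (β * (1/(1+θ)) + 1/(1-θ)) / (1 + β) := by
    rw [hlamdef]
    gcongr
  have hkey : 1 - m*θ < (1 - m*θ/2)*(1-θ^2) := by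
    rw [hθdef]
    nlinarith [hm0, hm1, sq_nonneg m]
  have hnum : β * (1/(1+θ)) + 1/(1-θ) = (1+β)*(1 - m*θ)/((1+θ)*(1-θ)) := by
    have h1 : (0:ℝ) < 1 + θ := by linarith
    have h2 : (0:ℝ) < 1 - θ := by linarith
    rw [hmdef]
    field_simp
    ring
  have hmid : (β * (1/(1+θ)) + 1/(1-θ)) / (1 + β) < 1 - θ * c := by
    have h1 : (0:ℝ) < 1 + θ := by linarith
    have h2 : (0:ℝ) < 1 - θ := by linarith
    have hLHS : (1+β)*(1 - m*θ)/((1+θ)*(1-θ)) / (1+β) = (1 - m*θ)/((1+θ)*(1-θ)) := by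
      have h3 : (1:ℝ)+β ≠ 0 := by linarith
      have h1' : (1:ℝ)+θ ≠ 0 := by linarith
      have h2' : (1:ℝ)-θ ≠ 0 := by linarith
      field_simp
    rw [hnum, hLHS, div_lt_iff₀ (by positivity : (0:ℝ) < (1+θ)*(1-θ))]
    calc 1 - m*θ < (1 - m*θ/2)*(1-θ^2) := hkey
      _ = (1 - θ * c) * ((1+θ)*(1-θ)) := by rw [hcdef]; ring
  have hlamlt : lam < Real.exp (-(θ*c)) := by
    have h := Real.add_one_le_exp (-(θ*c))
    calc lam ≤ (β * (1/(1+θ)) + 1/(1-θ)) / (1 + β) := hlamle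
      _ < 1 - θ * c := hmid
      _ ≤ Real.exp (-(θ*c)) := by linarith
  set ρ : ℝ := lam * Real.exp (θ*c) with hρdef
  have hρ0 : 0 < ρ := by rw [hρdef]; positivity
  have hρ1 : ρ < 1 := by
    have hep : (0:ℝ) < Real.exp (θ*c) := Real.exp_pos _
    have : ρ < Real.exp (-(θ*c)) * Real.exp (θ*c) := by
      rw [hρdef]
      exact mul_lt_mul_of_pos_right hlamlt hep
    rwa [← Real.exp_add, neg_add_cancel, Real.exp_zero] at this
  refine ⟨-Real.log ρ, by have := Real.log_neg hρ0 hρ1; linarith, ?_⟩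
  intro t ht
  set N : ℕ := Nat.floor ((t:ℝ)*c) + 1 with hNdef
  have hexpt : Real.exp (-(-Real.log ρ) * t) = ρ^t := by
    rw [show -(-Real.log ρ) * (t:ℝ) = (t:ℝ) * Real.log ρ by ring,
      Real.exp_nat_mul, Real.exp_log hρ0]
  have hsummable : Summable (fun jj : ℕ => (1-α)*α^jj) :=
    (summable_geometric_of_lt_one hα.le hα1).mul_left _
  have hterm : ∀ jj : ℕ, ENNReal.ofReal ((1-α)*α^jj) *
        μ jj {ω | t < sInf {s : ℕ | ω s = (jj:ℤ)}}
      ≤ ENNReal.ofReal ((1-α)*α^jj) * ENNReal.ofReal (Real.exp (-(-Real.log ρ)*t))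
        + (if N ≤ jj then ENNReal.ofReal ((1-α)*α^jj) else 0) := by
    intro jj
    by_cases hN : N ≤ jj
    · rw [if_pos hN]
      haveI := hprob jj
      calc ENNReal.ofReal ((1-α)*α^jj) * μ jj {ω | t < sInf {s : ℕ | ω s = (jj:ℤ)}}
          ≤ ENNReal.ofReal ((1-α)*α^jj) * 1 := mul_le_mul_right prob_le_one _
        _ = ENNReal.ofReal ((1-α)*α^jj) := mul_one _
        _ ≤ _ := le_add_self
    · rw [if_neg hN, add_zero]
      have hjle : (jj:ℝ) ≤ (t:ℝ)*c := by
        have h1 : jj ≤ Nat.floor ((t:ℝ)*c) := by omega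
        calc (jj:ℝ) ≤ (Nat.floor ((t:ℝ)*c) : ℝ) := by exact_mod_cast h1
          _ ≤ (t:ℝ)*c := Nat.floor_le (mul_nonneg (Nat.cast_nonneg t) hc0.le)
      have hcore := HT.core hβ hθ0.le μ p (fun j l m => (hp j l m).trans rfl) hcyl jj t
      rw [← hlamdef] at hcore
      have hbound : Real.exp (θ*jj) * lam^t ≤ Real.exp (-(-Real.log ρ)*t) := by
        rw [hexpt]
        have hρt : ρ^t = lam^t * Real.exp ((t:ℝ)*(θ*c)) := by
          rw [hρdef, mul_pow, Real.exp_nat_mul]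
        rw [hρt]
        have hee : Real.exp (θ*jj) ≤ Real.exp ((t:ℝ)*(θ*c)) := by
          apply Real.exp_le_exp.mpr
          calc θ*(jj:ℝ) ≤ θ*((t:ℝ)*c) := mul_le_mul_of_nonneg_left hjle hθ0.le
            _ = (t:ℝ)*(θ*c) := by ring
        calc Real.exp (θ*jj) * lam^t ≤ Real.exp ((t:ℝ)*(θ*c)) * lam^t :=
              mul_le_mul_of_nonneg_right hee (pow_nonneg hlam0.le t)
          _ = lam^t * Real.exp ((t:ℝ)*(θ*c)) := mul_comm _ _
      calc ENNReal.ofReal ((1-α)*α^jj) * μ jj {ω | t < sInf {s : ℕ | ω s = (jj:ℤ)}}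
          ≤ ENNReal.ofReal ((1-α)*α^jj) * ENNReal.ofReal (Real.exp (θ*jj) * lam^t) :=
            mul_le_mul_right hcore _
        _ ≤ ENNReal.ofReal ((1-α)*α^jj) * ENNReal.ofReal (Real.exp (-(-Real.log ρ)*t)) :=
            mul_le_mul_right (ENNReal.ofReal_le_ofReal hbound) _
  have hw1 : (∑' jj : ℕ, ENNReal.ofReal ((1-α)*α^jj)) = 1 := by
    rw [← ENNReal.ofReal_tsum_of_nonneg
      (fun n => mul_nonneg (by linarith) (pow_nonneg hα.le n)) hsummable]
    rw [tsum_mul_left, tsum_geometric_of_lt_one hα.le hα1,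
      mul_inv_cancel₀ (by linarith : (1:ℝ)-α ≠ 0)]
    exact ENNReal.ofReal_one
  have h_u : (∑' jj : ℕ, ENNReal.ofReal ((1-α)*α^jj) *
        ENNReal.ofReal (Real.exp (-(-Real.log ρ)*t)))
      ≤ ENNReal.ofReal (Real.exp (-(-Real.log ρ)*t)) := by
    rw [ENNReal.tsum_mul_right, hw1, one_mul]
  have hctN : (t:ℝ) * (β-1) / (2*(β+1)) ≤ (N:ℝ) := by
    have h1 : (t:ℝ)*c < (Nat.floor ((t:ℝ)*c) : ℝ) + 1 := Nat.lt_floor_add_one _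
    have h2 : (t:ℝ) * (β-1) / (2*(β+1)) = (t:ℝ)*c := by
      have h3 : (β:ℝ)+1 ≠ 0 := by linarith
      rw [hcdef, hmdef, div_div, mul_comm ((β:ℝ)+1) 2, ← mul_div_assoc]
    rw [h2, hNdef]
    push_cast
    linarith
  have h_v : (∑' jj : ℕ, (if N ≤ jj then ENNReal.ofReal ((1-α)*α^jj) else 0))
      ≤ ENNReal.ofReal (Real.rpow α ((t:ℝ) * (β-1) / (2*(β+1)))) := by
    have hcongr : ∀ jj : ℕ, (if N ≤ jj then ENNReal.ofReal ((1-α)*α^jj) else 0)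
        = ENNReal.ofReal (if N ≤ jj then (1-α)*α^jj else 0) := by
      intro jj; split_ifs <;> simp
    rw [tsum_congr hcongr]
    have hnn : ∀ n : ℕ, 0 ≤ (if N ≤ n then (1-α)*α^n else 0) := by
      intro n
      split_ifs
      · exact mul_nonneg (by linarith) (pow_nonneg hα.le n)
      · exact le_rfl
    have hsum2 : Summable (fun jj : ℕ => if N ≤ jj then (1-α)*α^jj else 0) := by
      apply Summable.of_nonneg_of_le hnn _ hsummable
      intro n
      split_ifs
      · exact le_rfl
      · exact mul_nonneg (by linarith) (pow_nonneg hα.le n)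
    rw [← ENNReal.ofReal_tsum_of_nonneg hnn hsum2]
    apply ENNReal.ofReal_le_ofReal
    have ht1 := Summable.sum_add_tsum_nat_add (f := fun jj : ℕ => if N ≤ jj then (1-α)*α^jj else 0) N hsum2
    have hz : (∑ i ∈ Finset.range N, (if N ≤ i then (1-α)*α^i else 0)) = 0 := by
      apply Finset.sum_eq_zero
      intro i hi
      rw [Finset.mem_range] at hi
      rw [if_neg (by omega)]
    have htail : (∑' i : ℕ, (if N ≤ i + N then (1-α)*α^(i+N) else 0)) = α^N := by
      have hc2 : ∀ i : ℕ, (if N ≤ i + N then (1-α)*α^(i+N) else 0) = ((1-α)*α^N)*α^i := by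
        intro i
        rw [if_pos (by omega), pow_add]
        ring
      rw [tsum_congr hc2, tsum_mul_left, tsum_geometric_of_lt_one hα.le hα1]
      rw [mul_comm (1-α) (α^N), mul_assoc, mul_inv_cancel₀ (by linarith : (1:ℝ)-α ≠ 0), mul_one]
    calc (∑' jj : ℕ, (if N ≤ jj then (1-α)*α^jj else 0))
        = α^N := by rw [← ht1, hz, zero_add, htail]
      _ = α ^ ((N:ℕ):ℝ) := (Real.rpow_natCast α N).symm
      _ ≤ Real.rpow α ((t:ℝ) * (β-1) / (2*(β+1))) :=
          Real.rpow_le_rpow_of_exponent_ge hα hα1.le hctN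
  have hSle : (∑' j : ℕ, ENNReal.ofReal ((1 - α) * α ^ j) *
        μ j {ω | t < sInf {s : ℕ | ω s = (j : ℤ)}})
      ≤ ENNReal.ofReal (Real.exp (-(-Real.log ρ) * t) +
          Real.rpow α ((t : ℝ) * (β - 1) / (2 * (β + 1)))) := by
    calc (∑' j : ℕ, ENNReal.ofReal ((1 - α) * α ^ j) *
          μ j {ω | t < sInf {s : ℕ | ω s = (j : ℤ)}})
        ≤ ∑' jj : ℕ, (ENNReal.ofReal ((1-α)*α^jj) *
              ENNReal.ofReal (Real.exp (-(-Real.log ρ)*t))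
            + (if N ≤ jj then ENNReal.ofReal ((1-α)*α^jj) else 0)) :=
          ENNReal.tsum_le_tsum hterm
      _ = (∑' jj : ℕ, ENNReal.ofReal ((1-α)*α^jj) *
              ENNReal.ofReal (Real.exp (-(-Real.log ρ)*t)))
            + (∑' jj : ℕ, (if N ≤ jj then ENNReal.ofReal ((1-α)*α^jj) else 0)) :=
          ENNReal.tsum_add
      _ ≤ ENNReal.ofReal (Real.exp (-(-Real.log ρ)*t))
            + ENNReal.ofReal (Real.rpow α ((t:ℝ) * (β-1) / (2*(β+1)))) :=
          add_le_add h_u h_v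
      _ = ENNReal.ofReal (Real.exp (-(-Real.log ρ) * t) +
            Real.rpow α ((t : ℝ) * (β - 1) / (2 * (β + 1)))) :=
          (ENNReal.ofReal_add (Real.exp_pos _).le
            (Real.rpow_nonneg hα.le _)).symm
  exact ENNReal.toReal_le_of_le_ofReal
    (add_nonneg (Real.exp_pos _).le (Real.rpow_nonneg hα.le _)) hSle
end
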